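/- arXiv:1812.10249 — 5 statements merged into one kernel-verified Lean document; each statement's English description precedes it below -/
import Mathlib

section
/- Suppose f_1,…,f_m ∈ F[x_1,…,x_n] and Φ is an F-faithful homomorphism for {f_1,…,f_m}. Then for every polynomial C(z_1,…,z_m) ∈ F[z_1,…,z_m], one has C(f_1,…,f_m) = 0 if and only if C(Φ(f_1),…,Φ(f_m)) = 0. -/
/-- The algebraic rank (transcendence degree) of a finite family `f : Fin m → A`
of elements of an `F`-algebra `A`: the size of a largest subfamily that is
algebraically independent over `F`. -/
noncomputable def algRank (F : Type*) [CommRing F] {A : Type*} [CommRing A] [Algebra F A]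
    {m : ℕ} (f : Fin m → A) : ℕ :=
  sSup {r : ℕ | ∃ ι : Fin r → Fin m, Function.Injective ι ∧ AlgebraicIndependent F (f ∘ ι)}

/-- Auxiliary: if each `f j` is algebraic over a subring `R` of a domain `A`
(compatibly a tower over the coefficient ring `F`), then any polynomial
expression in the `f j` with coefficients in `F` is algebraic over `R`. -/
theorem isAlgebraic_aeval_of_forall {F R A : Type*} [CommRing F] [CommRing R] [IsDomain R]
    [CommRing A] [IsDomain A] [Algebra F R] [Algebra R A] [Algebra F A] [IsScalarTower F R A]
    (hinj : Function.Injective (algebraMap R A)) {m : ℕ} {f : Fin m → A}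
    (hf : ∀ j, IsAlgebraic R (f j)) (C : MvPolynomial (Fin m) F) :
    IsAlgebraic R (MvPolynomial.aeval f C) := by
  classical
  set Ω := FractionRing A
  have hRΩ : Function.Injective (algebraMap R Ω) := by
    rw [IsScalarTower.algebraMap_eq R A Ω]
    exact (IsFractionRing.injective A Ω).comp hinj
  set K₀ := FractionRing R
  letI : Algebra K₀ Ω := (IsFractionRing.lift (g := algebraMap R Ω) hRΩ).toAlgebra
  haveI : IsScalarTower R K₀ Ω :=
    IsScalarTower.of_algebraMap_eq fun x =>
      (IsFractionRing.lift_algebraMap (K := K₀) hRΩ x).symm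
  have hint : ∀ j, IsIntegral K₀ (algebraMap A Ω (f j)) := fun j =>
    isAlgebraic_iff_isIntegral.mp ((IsFractionRing.isAlgebraic_iff R K₀ Ω).mp ((hf j).algebraMap))
  have hconst : ∀ a : F, IsIntegral K₀ (algebraMap A Ω (algebraMap F A a)) := by
    intro a
    have h1 : algebraMap F A a = algebraMap R A (algebraMap F R a) :=
      (IsScalarTower.algebraMap_apply F R A a)
    have h2 : algebraMap A Ω (algebraMap R A (algebraMap F R a)) =
        algebraMap K₀ Ω (algebraMap R K₀ (algebraMap F R a)) := by
      rw [← IsScalarTower.algebraMap_apply R A Ω, IsScalarTower.algebraMap_apply R K₀ Ω]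
    rw [h1, h2]
    exact isIntegral_algebraMap
  have hInt : IsIntegral K₀ (algebraMap A Ω (MvPolynomial.aeval f C)) := by
    induction C using MvPolynomial.induction_on with
    | C a => simpa using hconst a
    | add p q hp hq =>
        rw [map_add, map_add]; exact hp.add hq
    | mul_X p j hp =>
        rw [map_mul, MvPolynomial.aeval_X, map_mul]; exact hp.mul (hint j)
  obtain ⟨p, hp0, hpe⟩ := (IsFractionRing.isAlgebraic_iff R K₀ Ω).mpr hInt.isAlgebraic
  refine ⟨p, hp0, ?_⟩
  apply IsFractionRing.injective A Ω
  rw [map_zero, ← Polynomial.aeval_algebraMap_apply]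
  exact hpe

/-- If `Φ : F[x_1,…,x_n] → K[y_1,…,y_r]` is an `F`-faithful homomorphism for
`{f_1,…,f_m}` (i.e. it preserves the algebraic rank over `F` of this set), then for
every polynomial `C(z_1,…,z_m)` over `F` we have
`C(f_1,…,f_m) = 0 ↔ C(Φ(f_1),…,Φ(f_m)) = 0`. -/
theorem faithful_preserves_nonzeroness (F K : Type*) [Field F] [Field K] [Algebra F K]
    (n r m : ℕ) (f : Fin m → MvPolynomial (Fin n) F)
    (Φ : MvPolynomial (Fin n) F →ₐ[F] MvPolynomial (Fin r) K)
    (hfaithful : algRank F f = algRank F (fun i => Φ (f i))) :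
    ∀ C : MvPolynomial (Fin m) F,
      MvPolynomial.aeval f C = 0 ↔ MvPolynomial.aeval (fun i => Φ (f i)) C = 0 := by
  classical
  have hcomp : ∀ D : MvPolynomial (Fin m) F,
      MvPolynomial.aeval (fun i => Φ (f i)) D = Φ (MvPolynomial.aeval f D) := by
    intro D
    rw [← MvPolynomial.comp_aeval]
    rfl
  intro C
  constructor
  · intro h
    rw [hcomp, h, map_zero]
  · intro hΦ
    by_contra hg0
    set g : MvPolynomial (Fin n) F := MvPolynomial.aeval f C with hgdef
    -- boundedness of the rank sets
    have hboundf : BddAbove {r' : ℕ | ∃ ι : Fin r' → Fin m, Function.Injective ι ∧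
        AlgebraicIndependent F (f ∘ ι)} := by
      refine ⟨m, fun r' hr' => ?_⟩
      obtain ⟨ι, hι, -⟩ := hr'
      simpa using Fintype.card_le_of_injective ι hι
    have hboundΦ : BddAbove {r' : ℕ | ∃ ι : Fin r' → Fin m, Function.Injective ι ∧
        AlgebraicIndependent F ((fun i => Φ (f i)) ∘ ι)} := by
      refine ⟨m, fun r' hr' => ?_⟩
      obtain ⟨ι, hι, -⟩ := hr'
      simpa using Fintype.card_le_of_injective ι hι
    have hne : {r' : ℕ | ∃ ι : Fin r' → Fin m, Function.Injective ι ∧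
        AlgebraicIndependent F ((fun i => Φ (f i)) ∘ ι)}.Nonempty := by
      refine ⟨0, Fin.elim0, fun a b h => Subsingleton.elim a b, ?_⟩
      exact algebraicIndependent_empty_type
    set k := algRank F (fun i => Φ (f i)) with hk
    have hkmem : k ∈ {r' : ℕ | ∃ ι : Fin r' → Fin m, Function.Injective ι ∧
        AlgebraicIndependent F ((fun i => Φ (f i)) ∘ ι)} := Nat.sSup_mem hne hboundΦ
    obtain ⟨ι, hιinj, hΦind⟩ := hkmem
    have hfι : AlgebraicIndependent F (f ∘ ι) :=
      AlgebraicIndependent.of_comp Φ hΦind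
    set R₀ := Algebra.adjoin F (Set.range (f ∘ ι)) with hR₀
    -- every f j is algebraic over R₀
    have halg : ∀ j, IsAlgebraic R₀ (f j) := by
      intro j
      by_cases hj : j ∈ Set.range ι
      · obtain ⟨i, rfl⟩ := hj
        have hmem : f (ι i) ∈ R₀ := Algebra.subset_adjoin ⟨i, rfl⟩
        have := isAlgebraic_algebraMap (R := R₀) (A := MvPolynomial (Fin n) F) ⟨f (ι i), hmem⟩
        simpa using this
      · have hconsinj : Function.Injective (Fin.cons j ι : Fin (k + 1) → Fin m) :=
          Fin.cons_injective_of_injective hj hιinj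
        have hdep : ¬ AlgebraicIndependent F (f ∘ (Fin.cons j ι : Fin (k + 1) → Fin m)) := by
          intro hind
          have hmem : (k + 1) ∈ {r' : ℕ | ∃ ι' : Fin r' → Fin m, Function.Injective ι' ∧
              AlgebraicIndependent F (f ∘ ι')} := ⟨_, hconsinj, hind⟩
          have hle : (k + 1) ≤ algRank F f := le_csSup hboundf hmem
          have heq : algRank F f = k := by rw [hk]; exact hfaithful
          omega
        have hopt : ¬ AlgebraicIndependent F
            (fun o : Option (Fin k) => o.elim (f j) (f ∘ ι)) := by
          intro hind
          apply hdep
          refine (algebraicIndependent_equiv' (finSuccEquiv k)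
            (f := fun o : Option (Fin k) => o.elim (f j) (f ∘ ι))
            (g := f ∘ (Fin.cons j ι : Fin (k + 1) → Fin m)) ?_).mpr hind
          funext o
          refine Fin.cases ?_ ?_ o <;> simp
        rw [hfι.option_iff_transcendental (f j)] at hopt
        exact not_not.mp hopt
    -- g is algebraic over R₀
    have hinjR₀ : Function.Injective (algebraMap R₀ (MvPolynomial (Fin n) F)) := Subtype.val_injective
    have halgg : IsAlgebraic R₀ g := isAlgebraic_aeval_of_forall hinjR₀ halg C
    have hgnzd : g ∈ nonZeroDivisors (MvPolynomial (Fin n) F) := mem_nonZeroDivisors_of_ne_zero hg0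
    obtain ⟨q, hq0, hqe⟩ := halgg.exists_nonzero_coeff_and_aeval_eq_zero hgnzd
    -- transfer q to a polynomial over MvPolynomial (Fin k) F via repr
    have hreprinj : Function.Injective (hfι.repr : R₀ →ₐ[F] MvPolynomial (Fin k) F) := by
      have : Function.Injective (hfι.repr : R₀ →+* MvPolynomial (Fin k) F) :=
        (RingHom.injective_iff_ker_eq_bot _).mpr hfι.repr_ker
      exact this
    set q' : Polynomial (MvPolynomial (Fin k) F) :=
      q.map (hfι.repr : R₀ →+* MvPolynomial (Fin k) F) with hq'
    have hcompRepr : ((MvPolynomial.aeval (f ∘ ι)).toRingHom :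
        MvPolynomial (Fin k) F →+* MvPolynomial (Fin n) F).comp (hfι.repr : R₀ →+* MvPolynomial (Fin k) F) =
        algebraMap R₀ (MvPolynomial (Fin n) F) := by
      have h1 : (MvPolynomial.aeval (f ∘ ι)).comp hfι.repr = Subalgebra.val _ :=
        hfι.aeval_comp_repr
      have h2 := congrArg AlgHom.toRingHom h1
      exact h2
    have hq'eval : Polynomial.eval₂
        ((MvPolynomial.aeval (f ∘ ι)).toRingHom : MvPolynomial (Fin k) F →+* MvPolynomial (Fin n) F) g q' = 0 := by
      rw [hq', Polynomial.eval₂_map, hcompRepr]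
      exact hqe
    have hΦg : Φ g = 0 := by
      rw [hgdef, ← hcomp]
      exact hΦ
    have hzero : MvPolynomial.aeval ((fun i => Φ (f i)) ∘ ι) (q'.coeff 0) = 0 := by
      have h1 := Polynomial.hom_eval₂ q'
        ((MvPolynomial.aeval (f ∘ ι)).toRingHom : MvPolynomial (Fin k) F →+* MvPolynomial (Fin n) F)
        (Φ : MvPolynomial (Fin n) F →+* MvPolynomial (Fin r) K) g
      rw [hq'eval, map_zero] at h1
      simp only [AlgHom.coe_toRingHom] at h1
      rw [hΦg, Polynomial.eval₂_at_zero] at h1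
      have h2 : (Φ : MvPolynomial (Fin n) F →+* MvPolynomial (Fin r) K).comp
          ((MvPolynomial.aeval (f ∘ ι)).toRingHom : MvPolynomial (Fin k) F →+* MvPolynomial (Fin n) F) =
          ((MvPolynomial.aeval ((fun i => Φ (f i)) ∘ ι)).toRingHom :
            MvPolynomial (Fin k) F →+* MvPolynomial (Fin r) K) := by
        have h3 : Φ.comp (MvPolynomial.aeval (f ∘ ι)) =
            MvPolynomial.aeval (fun i => Φ ((f ∘ ι) i)) := MvPolynomial.comp_aeval (f := f ∘ ι) Φ
        have h4 := congrArg AlgHom.toRingHom h3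
        exact h4
      rw [h2] at h1
      exact h1.symm
    have hinj2 : Function.Injective (MvPolynomial.aeval ((fun i => Φ (f i)) ∘ ι) :
        MvPolynomial (Fin k) F →ₐ[F] MvPolynomial (Fin r) K) :=
      algebraicIndependent_iff_injective_aeval.mp hΦind
    have hq'c0 : q'.coeff 0 = 0 := by
      apply hinj2
      rw [map_zero]
      exact hzero
    have hc0 : (hfι.repr : R₀ →ₐ[F] MvPolynomial (Fin k) F) (q.coeff 0) = 0 := by
      have hcm : q'.coeff 0 = hfι.repr (q.coeff 0) := Polynomial.coeff_map _ 0
      rw [← hcm]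
      exact hq'c0
    exact hq0 (hreprinj (by rw [hc0, map_zero]))
end

section
/- Let F be a field, s a formal variable, and w_1 < w_2 < … < w_n natural numbers. Let V be the n×n matrix over F[s] with V[i,j] = s^{j·w_i}, and let V' be any matrix obtained from V by replacing some off-diagonal entries by 0 (so V'[i,i] = s^{i·w_i} for all i, and for i ≠ j, V'[i,j] ∈ {0, s^{j·w_i}}). Then det(V') ≠ 0 and the degree of det(V') as a polynomial in s equals Σ_{i=1}^{n} i·w_i. -/
open Polynomial

/-- Let `w_1 < w_2 < … < w_n` be natural numbers, and let `V'` be an `n × n` matrix over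
`F[s]` whose diagonal entry `(i,i)` is `s^{i·w_i}` and whose off-diagonal entry `(i,j)`
is either `0` or `s^{j·w_i}` (index positions counted from 1).  Then `det V' ≠ 0` and
`deg (det V') = ∑_{i=1}^n i·w_i`. -/
theorem det_vandermonde_with_zeros (F : Type*) [Field F] (n : ℕ)
    (w : Fin n → ℕ) (hw : StrictMono w)
    (V' : Matrix (Fin n) (Fin n) (Polynomial F))
    (hdiag : ∀ i : Fin n, V' i i = X ^ ((i.1 + 1) * w i))
    (hoff : ∀ i j : Fin n, i ≠ j → V' i j = 0 ∨ V' i j = X ^ ((j.1 + 1) * w i)) :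
    V'.det ≠ 0 ∧ (V'.det).natDegree = ∑ i : Fin n, (i.1 + 1) * w i := by
  classical
  set D := ∑ i : Fin n, (i.1 + 1) * w i with hD
  -- each permutation term is 0 or a power of X
  have key : ∀ σ : Equiv.Perm (Fin n),
      (∏ i, V' (σ i) i) = 0 ∨
      (∏ i, V' (σ i) i) = X ^ (∑ i : Fin n, (i.1 + 1) * w (σ i)) := by
    intro σ
    by_cases h : ∀ i, V' (σ i) i = X ^ ((i.1 + 1) * w (σ i))
    · right
      rw [Finset.prod_congr rfl fun i _ => h i, Finset.prod_pow_eq_pow_sum]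
    · left
      push_neg at h
      obtain ⟨i, hi⟩ := h
      apply Finset.prod_eq_zero (Finset.mem_univ i)
      rcases eq_or_ne (σ i) i with he | he
      · exact absurd (by rw [he, hdiag i]) hi
      · rcases hoff (σ i) i he with h0 | h0
        · exact h0
        · exact absurd h0 hi
  -- monovariance
  have hmono : Monovary (fun i : Fin n => i.1 + 1) w := by
    intro i j h
    exact Nat.succ_le_succ (Fin.le_def.1 (le_of_lt (hw.lt_iff_lt.1 h)))
  -- strict rearrangement inequality for non-identity permutations
  have hlt : ∀ σ : Equiv.Perm (Fin n), σ ≠ 1 →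
      (∑ i : Fin n, (i.1 + 1) * w (σ i)) < D := by
    intro σ hσ
    have hns : ¬ Monovary (fun i : Fin n => i.1 + 1) (w ∘ σ) := by
      intro hmv
      apply hσ
      have hsm : StrictMono σ := by
        intro i j hij
        rcases lt_trichotomy (σ i) (σ j) with h | h | h
        · exact h
        · exact absurd (σ.injective h) (ne_of_lt hij)
        · have := hmv (hw h)
          simp only at this
          omega
      have hsm' : StrictMono (σ⁻¹ : Equiv.Perm (Fin n)) := by
        intro a b hab
        rcases lt_trichotomy ((σ⁻¹ : Equiv.Perm (Fin n)) a) ((σ⁻¹ : Equiv.Perm (Fin n)) b)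
          with h | h | h
        · exact h
        · exact absurd ((σ⁻¹ : Equiv.Perm (Fin n)).injective h) (ne_of_lt hab)
        · have := hsm h
          simp only [← Equiv.Perm.mul_apply, mul_inv_cancel, Equiv.Perm.one_apply] at this
          exact absurd hab (not_lt.2 (le_of_lt this))
      haveI : WellFoundedLT (Fin n) := Finite.to_wellFoundedLT
      ext i
      have h1 : i ≤ σ i := hsm.le_apply
      have h2 : σ i ≤ σ⁻¹ (σ i) := hsm'.le_apply
      simp only [← Equiv.Perm.mul_apply, inv_mul_cancel, Equiv.Perm.one_apply] at h2
      exact le_antisymm (Fin.le_def.1 h2) (Fin.le_def.1 h1)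
    have := (hmono.sum_smul_comp_perm_lt_sum_smul_iff (σ := σ)).2 hns
    simpa [smul_eq_mul, hD] using this
  -- the identity term
  have hid : (∏ i, V' ((1 : Equiv.Perm (Fin n)) i) i) = X ^ D := by
    rw [hD, ← Finset.prod_pow_eq_pow_sum]
    exact Finset.prod_congr rfl fun i _ => by simp [hdiag i]
  -- coefficients at degrees ≥ D
  have hcoeff : ∀ k, D ≤ k → V'.det.coeff k = if k = D then 1 else 0 := by
    intro k hk
    rw [Matrix.det_apply, Polynomial.finset_sum_coeff]
    rw [Finset.sum_eq_single (1 : Equiv.Perm (Fin n))]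
    · rw [Equiv.Perm.sign_one, one_smul, hid, Polynomial.coeff_X_pow]
    · intro σ _ hσ
      rcases key σ with h0 | h0
      · simp [h0]
      · rw [Polynomial.coeff_smul, h0, Polynomial.coeff_X_pow,
          if_neg (by have := hlt σ hσ; omega), smul_zero]
    · intro h
      exact absurd (Finset.mem_univ _) h
  have hne : V'.det ≠ 0 := by
    intro h
    have := hcoeff D le_rfl
    rw [h] at this
    simp at this
  refine ⟨hne, le_antisymm ?_ ?_⟩
  · rw [Polynomial.natDegree_le_iff_coeff_eq_zero]
    intro k hk
    rw [hcoeff k (le_of_lt hk), if_neg (by omega)]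
  · apply Polynomial.le_natDegree_of_ne_zero
    rw [hcoeff D le_rfl, if_pos rfl]
    exact one_ne_zero
end

section
/- Let A be a k×N matrix of rank k over a field F, with columns indexed by a finite set of monomials, and let wt be a weight function assigning distinct natural-number weights to distinct columns. For a k-element subset S of columns, indexed so that its members x^{e_1},…,x^{e_k} satisfy wt(x^{e_1}) < wt(x^{e_2}) < … < wt(x^{e_k}), define wt(S) = Σ_{i=1}^{k} i·wt(x^{e_i}). Then among all k-element column subsets S for which the k×k minor det(A[S]) is nonzero, there is a unique one of maximum weight wt(S). -/
open Finset

/-- The weight of a `k`-element set `S` of columns: if the elements of `S` are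
`c_1, …, c_k` listed so that `wt c_1 < wt c_2 < … < wt c_k`, then
`wtSet S = ∑ i, i * wt c_i`.  (Equivalently, each `c ∈ S` is counted with multiplicity
equal to its rank in `S`, i.e. the number of elements of `S` of weight at most `wt c`;
this agrees with the sorted description since `wt` is injective on the column set.) -/
noncomputable def wtSet {ι : Type*} [Fintype ι] (wt : ι → ℕ) (S : Finset ι) : ℕ :=
  ∑ c ∈ S, (S.filter fun c' => wt c' ≤ wt c).card * wt c

/-- `S` indexes a nonzero `k × k` minor of `A`: listing the columns of `S` in some
(equivalently, any) order `g : Fin k → ι` gives a `k × k` submatrix with nonzero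
determinant. -/
def nonzeroMinor {F ι : Type*} [Field F] [Fintype ι] {k : ℕ}
    (A : Matrix (Fin k) ι F) (S : Finset ι) : Prop :=
  ∃ g : Fin k → ι, (∀ i, g i ∈ S) ∧ Function.Injective g ∧
    (Matrix.of fun i j => A i (g j)).det ≠ 0

lemma wtSet_identity {ι : Type*} [Fintype ι] (wt : ι → ℕ) (hwt : Function.Injective wt)
    (S : Finset ι) :
    2 * wtSet wt S = (∑ p ∈ S ×ˢ S, max (wt p.1) (wt p.2)) + ∑ c ∈ S, wt c := by
  classical
  have h1 : ∀ c ∈ S, (S.filter fun c' => wt c' ≤ wt c).card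
      = (S.filter fun c' => wt c' < wt c).card + 1 := by
    intro c hc
    have h2 : S.filter (fun c' => wt c' ≤ wt c) = insert c (S.filter fun c' => wt c' < wt c) := by
      ext z
      simp only [mem_filter, mem_insert]
      constructor
      · rintro ⟨hz, hle⟩
        rcases eq_or_lt_of_le hle with h | h
        · exact Or.inl (hwt h)
        · exact Or.inr ⟨hz, h⟩
      · rintro (rfl | ⟨hz, hlt⟩)
        · exact ⟨hc, le_refl _⟩
        · exact ⟨hz, hlt.le⟩
    rw [h2, card_insert_of_notMem (by simp)]
  have hwtS : wtSet wt S
      = (∑ c ∈ S, (S.filter fun c' => wt c' < wt c).card * wt c) + ∑ c ∈ S, wt c := by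
    rw [wtSet, ← Finset.sum_add_distrib]
    apply Finset.sum_congr rfl
    intro c hc
    rw [h1 c hc, add_mul, one_mul]
  have hK : (∑ p ∈ S ×ˢ S, max (wt p.1) (wt p.2))
      = wtSet wt S + ∑ c ∈ S, (S.filter fun c' => wt c' < wt c).card * wt c := by
    rw [Finset.sum_product]
    have inner : ∀ c ∈ S, (∑ c' ∈ S, max (wt c) (wt c'))
        = (S.filter fun c' => wt c' ≤ wt c).card * wt c
          + ∑ c' ∈ S.filter (fun c' => wt c < wt c'), wt c' := by
      intro c hc
      rw [← Finset.sum_filter_add_sum_filter_not S (fun c' => wt c' ≤ wt c)]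
      congr 1
      · rw [Finset.sum_congr rfl (fun c' hc' => max_eq_left (mem_filter.mp hc').2),
          Finset.sum_const, smul_eq_mul]
      · apply Finset.sum_congr
        · ext z; simp [not_le]
        · intro c' hc'
          exact max_eq_right (le_of_lt (by simpa using (mem_filter.mp hc').2))
    rw [Finset.sum_congr rfl inner, Finset.sum_add_distrib]
    congr 1
    calc ∑ c ∈ S, ∑ c' ∈ S.filter (fun c' => wt c < wt c'), wt c'
        = ∑ c ∈ S, ∑ c' ∈ S, if wt c < wt c' then wt c' else 0 := by
          simp [Finset.sum_filter]
      _ = ∑ c' ∈ S, ∑ c ∈ S, if wt c < wt c' then wt c' else 0 := Finset.sum_comm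
      _ = ∑ c' ∈ S, (S.filter fun c => wt c < wt c').card * wt c' := by
          apply Finset.sum_congr rfl
          intro c' _
          rw [← Finset.sum_filter, Finset.sum_const, smul_eq_mul]
  omega

lemma wtSet_lt_exchange {ι : Type*} [Fintype ι] [DecidableEq ι] (wt : ι → ℕ)
    (hwt : Function.Injective wt)
    (T : Finset ι) (x y : ι) (hy : y ∈ T) (hx : x ∉ T) (hxy : wt y < wt x) :
    wtSet wt T < wtSet wt (insert x (T.erase y)) := by
  set e : ι → ι := fun z => if z = y then x else z with he
  have hinj : Set.InjOn e T := by
    intro a ha b hb hab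
    by_cases h1 : a = y <;> by_cases h2 : b = y
    · rw [h1, h2]
    · subst h1; simp only [he, if_pos rfl, if_neg h2] at hab
      exact absurd (hab ▸ hb) hx
    · subst h2; simp only [he, if_pos rfl, if_neg h1] at hab
      exact absurd (hab.symm ▸ ha) hx
    · simpa [he, if_neg h1, if_neg h2] using hab
  have hT' : T.image e = insert x (T.erase y) := by
    ext z
    simp only [mem_image, mem_insert, mem_erase, he]
    constructor
    · rintro ⟨a, ha, rfl⟩
      by_cases h : a = y
      · simp [h]
      · simp [h, ha]
    · rintro (rfl | ⟨hzy, hz⟩)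
      · exact ⟨y, hy, by simp⟩
      · exact ⟨z, hz, by simp [hzy]⟩
  have hmono : ∀ z ∈ T, wt z ≤ wt (e z) := by
    intro z hz
    by_cases h : z = y
    · simp [he, h, hxy.le]
    · simp [he, h]
  have hf : ∑ c ∈ T, wt c < ∑ c ∈ T.image e, wt c := by
    rw [Finset.sum_image (fun a ha b hb h => hinj ha hb h)]
    exact Finset.sum_lt_sum hmono ⟨y, hy, by simpa [he] using hxy⟩
  have hprod : (T.image e) ×ˢ (T.image e) = (T ×ˢ T).image (Prod.map e e) := by
    ext p
    simp only [mem_product, mem_image, Prod.map]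
    constructor
    · rintro ⟨⟨a, ha, h1⟩, ⟨b, hb, h2⟩⟩
      exact ⟨(a, b), by simp [mem_product, ha, hb], by simp [h1, h2, Prod.ext_iff]⟩
    · rintro ⟨⟨a, b⟩, hab, rfl⟩
      simp only [mem_product] at hab
      exact ⟨⟨a, hab.1, rfl⟩, ⟨b, hab.2, rfl⟩⟩
  have hK : (∑ p ∈ T ×ˢ T, max (wt p.1) (wt p.2))
      ≤ ∑ p ∈ (T.image e) ×ˢ (T.image e), max (wt p.1) (wt p.2) := by
    rw [hprod, Finset.sum_image (fun a ha b hb h => by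
      simp only [mem_coe, mem_product] at ha hb
      exact Prod.ext (hinj ha.1 hb.1 (congrArg Prod.fst h)) (hinj ha.2 hb.2 (congrArg Prod.snd h)))]
    apply Finset.sum_le_sum
    intro p hp
    simp only [mem_product] at hp
    exact max_le_max (hmono _ hp.1) (hmono _ hp.2)
  have h2 := wtSet_identity wt hwt T
  have h3 := wtSet_identity wt hwt (insert x (T.erase y))
  rw [← hT'] at h3 ⊢
  omega

lemma det_iff {F ι : Type*} [Field F] [Fintype ι] {k : ℕ} (A : Matrix (Fin k) ι F) (g : Fin k → ι) :
    (Matrix.of fun i j => A i (g j)).det ≠ 0 ↔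
      LinearIndependent F (fun j => fun i => A i (g j)) := by
  constructor
  · intro h
    exact Matrix.linearIndependent_cols_iff_isUnit (K := F)
      (A := Matrix.of fun i j => A i (g j)) |>.mpr
      ((Matrix.isUnit_iff_isUnit_det _).mpr (isUnit_iff_ne_zero.mpr h))
  · intro h
    exact isUnit_iff_ne_zero.mp ((Matrix.isUnit_iff_isUnit_det _).mp
      (Matrix.linearIndependent_cols_iff_isUnit (K := F)
        (A := Matrix.of fun i j => A i (g j)) |>.mp h))

lemma exists_nonzeroMinor {F ι : Type*} [Field F] [Fintype ι] {k : ℕ}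
    (A : Matrix (Fin k) ι F) (hA : A.rank = k) :
    ∃ S : Finset ι, S.card = k ∧ nonzeroMinor A S := by
  classical
  set v : ι → (Fin k → F) := fun c i => A i c with hv
  have hspan : Submodule.span F (Set.range v) = ⊤ := by
    apply Submodule.eq_top_of_finrank_eq
    have h1 : LinearMap.range A.mulVecLin = Submodule.span F (Set.range A.transpose) :=
      Matrix.range_mulVecLin A
    have h2 : Set.range A.transpose = Set.range v := rfl
    rw [← h2, ← h1]
    rw [Matrix.rank] at hA
    rw [hA, Module.finrank_fin_fun]
  obtain ⟨b, hsub, hbspan, hli⟩ := exists_linearIndependent F (Set.range v)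
  rw [hspan] at hbspan
  have hbfin : b.Finite := hli.setFinite
  haveI : Fintype b := hbfin.fintype
  have B : Module.Basis b F (Fin k → F) := Module.Basis.mk hli (by rw [Subtype.range_coe, hbspan])
  have hcard : Fintype.card b = k := by
    rw [← Module.finrank_eq_card_basis B, Module.finrank_fin_fun]
  let eqv : Fin k ≃ b := (Fintype.equivFinOfCardEq hcard).symm
  have pick : ∀ u : b, ∃ c : ι, v c = (u : Fin k → F) := fun u => hsub u.2
  choose p hp using pick
  have hpinj : Function.Injective p := by
    intro u u' h
    have : (u : Fin k → F) = (u' : Fin k → F) := by rw [← hp u, ← hp u', h]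
    exact Subtype.ext this
  set g : Fin k → ι := p ∘ eqv with hg
  have hginj : Function.Injective g := hpinj.comp eqv.injective
  have hgv : (fun j => fun i => A i (g j)) = fun j => ((eqv j : b) : Fin k → F) := by
    funext j
    exact hp (eqv j)
  have hli' : LinearIndependent F (fun j => fun i => A i (g j)) := by
    rw [hgv]
    exact hli.comp eqv eqv.injective
  refine ⟨Finset.univ.image g, ?_, g, fun i => mem_image_of_mem g (mem_univ i), hginj,
    (det_iff A g).mpr hli'⟩
  rw [Finset.card_image_of_injective _ hginj, card_univ, Fintype.card_fin]

lemma exchange_lemma {F ι : Type*} [Field F] [Fintype ι] [DecidableEq ι] {k : ℕ}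
    (A : Matrix (Fin k) ι F) (S T : Finset ι)
    (hScard : S.card = k) (hS : nonzeroMinor A S)
    (hTcard : T.card = k) (hT : nonzeroMinor A T)
    (x : ι) (hxS : x ∈ S) (hxT : x ∉ T) :
    ∃ y ∈ T, y ∉ S ∧ (insert x (T.erase y)).card = k ∧ nonzeroMinor A (insert x (T.erase y)) := by
  classical
  have hk : 0 < k := by
    rcases Nat.eq_zero_or_pos k with h | h
    · exfalso; rw [h, Finset.card_eq_zero] at hScard; simp [hScard] at hxS
    · exact h
  haveI : Nonempty (Fin k) := ⟨⟨0, hk⟩⟩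
  obtain ⟨gS, hgSmem, hgSinj, hgSdet⟩ := hS
  obtain ⟨gT, hgTmem, hgTinj, hgTdet⟩ := hT
  have hSli := (det_iff A gS).mp hgSdet
  have hTli := (det_iff A gT).mp hgTdet
  -- images are exactly S and T
  have hSimg : Finset.univ.image gS = S := by
    apply Finset.eq_of_subset_of_card_le
    · intro z hz; obtain ⟨i, _, rfl⟩ := Finset.mem_image.mp hz; exact hgSmem i
    · rw [Finset.card_image_of_injective _ hgSinj, card_univ, Fintype.card_fin, hScard]
  have hTimg : Finset.univ.image gT = T := by
    apply Finset.eq_of_subset_of_card_le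
    · intro z hz; obtain ⟨i, _, rfl⟩ := Finset.mem_image.mp hz; exact hgTmem i
    · rw [Finset.card_image_of_injective _ hgTinj, card_univ, Fintype.card_fin, hTcard]
  obtain ⟨i0, -, hi0⟩ := Finset.mem_image.mp (hSimg ▸ hxS)
  have hcardfin : Fintype.card (Fin k) = Module.finrank F (Fin k → F) := by
    rw [Fintype.card_fin, Module.finrank_fin_fun]
  let bT : Module.Basis (Fin k) F (Fin k → F) := basisOfLinearIndependentOfCardEqFinrank hTli hcardfin
  have hbT : ∀ j, bT j = fun i => A i (gT j) := fun j =>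
    congrFun (coe_basisOfLinearIndependentOfCardEqFinrank hTli hcardfin) j
  set vx : Fin k → F := fun i => A i x with hvx
  set r := bT.repr vx with hr
  -- find j0 with nonzero coefficient outside S
  have hrepr : ∑ j, r j • bT j = vx := bT.sum_repr vx
  have hj0 : ∃ j0, r j0 ≠ 0 ∧ gT j0 ∉ S := by
    by_contra hcon
    push_neg at hcon
    have hmem : vx ∈ Submodule.span F ((fun j => fun i => A i (gS j)) ''
        {i : Fin k | i ≠ i0}) := by
      rw [← hrepr]
      apply Submodule.sum_mem
      intro j _
      by_cases hrj : r j = 0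
      · rw [hrj, zero_smul]; exact Submodule.zero_mem _
      · apply Submodule.smul_mem
        apply Submodule.subset_span
        have hjS : gT j ∈ S := hcon j hrj
        obtain ⟨i, -, hi⟩ := Finset.mem_image.mp (hSimg ▸ hjS)
        refine ⟨i, ?_, by rw [hbT j, ← hi]⟩
        intro hii0
        rw [hii0, hi0] at hi
        exact hxT (hi ▸ hgTmem j)
    have := hSli.notMem_span_image (s := {i : Fin k | i ≠ i0}) (x := i0) (by simp)
    rw [hi0] at this
    exact this hmem
  obtain ⟨j0, hj0ne, hj0S⟩ := hj0
  set y := gT j0 with hy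
  have hyT : y ∈ T := hgTmem j0
  set gT' : Fin k → ι := Function.update gT j0 x with hgT'
  have hgT'j0 : gT' j0 = x := Function.update_self j0 x gT
  have hgT'ne : ∀ j, j ≠ j0 → gT' j = gT j := fun j hj => Function.update_of_ne hj x gT
  have hgT'inj : Function.Injective gT' := by
    intro a b hab
    by_cases ha : a = j0 <;> by_cases hb : b = j0
    · rw [ha, hb]
    · rw [ha, hgT'j0] at hab; rw [hgT'ne b hb] at hab
      exact absurd (hab ▸ hgTmem b) hxT
    · rw [hb, hgT'j0] at hab; rw [hgT'ne a ha] at hab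
      exact absurd (hab.symm ▸ hgTmem a) hxT
    · rw [hgT'ne a ha, hgT'ne b hb] at hab; exact hgTinj hab
  set vT' : Fin k → (Fin k → F) := fun j => fun i => A i (gT' j) with hvT'
  have hvT'j0 : vT' j0 = vx := by funext i; exact congrArg (A i) hgT'j0
  have hvT'ne : ∀ j, j ≠ j0 → vT' j = bT j := by
    intro j hj
    rw [hbT j]
    funext i
    exact congrArg (A i) (hgT'ne j hj)
  -- spanning
  have hspan : ⊤ ≤ Submodule.span F (Set.range vT') := by
    rw [← bT.span_eq]
    apply Submodule.span_le.mpr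
    rintro z ⟨j, rfl⟩
    by_cases hj : j = j0
    · rw [hj]
      have hbTj0 : bT j0 = (r j0)⁻¹ • (vx - ∑ j ∈ Finset.univ.erase j0, r j • bT j) := by
        rw [← hrepr, ← Finset.add_sum_erase _ _ (Finset.mem_univ j0)]
        rw [add_sub_cancel_right, smul_smul, inv_mul_cancel₀ hj0ne, one_smul]
      rw [hbTj0]
      apply Submodule.smul_mem
      apply Submodule.sub_mem
      · rw [← hvT'j0]; exact Submodule.subset_span ⟨j0, rfl⟩
      · apply Submodule.sum_mem
        intro j hj
        have hj' : j ≠ j0 := (Finset.mem_erase.mp hj).1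
        apply Submodule.smul_mem
        rw [← hvT'ne j hj']
        exact Submodule.subset_span ⟨j, rfl⟩
    · rw [← hvT'ne j hj]
      exact Submodule.subset_span ⟨j, rfl⟩
  have hli' : LinearIndependent F vT' :=
    linearIndependent_of_top_le_span_of_card_eq_finrank hspan hcardfin
  -- membership
  have hmem' : ∀ j, gT' j ∈ insert x (T.erase y) := by
    intro j
    by_cases hj : j = j0
    · rw [hj, hgT'j0]; exact Finset.mem_insert_self _ _
    · rw [hgT'ne j hj]
      apply Finset.mem_insert_of_mem
      exact Finset.mem_erase.mpr ⟨fun h => hj (hgTinj h), hgTmem j⟩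
  have hycard : (insert x (T.erase y)).card = k := by
    rw [Finset.card_insert_of_notMem (fun h => hxT (Finset.mem_of_mem_erase h)),
      Finset.card_erase_of_mem hyT, hTcard]
    omega
  exact ⟨y, hyT, hj0S, hycard, gT', hmem', hgT'inj, (det_iff A gT').mpr hli'⟩

/-- Let `A` be a `k × N` matrix of rank `k` over a field `F`, whose columns are indexed
by a finite set of monomials, and let `wt` assign distinct natural-number weights to
distinct columns.  Then among all `k`-element column subsets `S` with `det (A[S]) ≠ 0`,
there is a unique one of maximum weight `wtSet S`. -/
theorem unique_max_weight_nonzero_minor {F ι : Type*} [Field F] [Fintype ι] (k : ℕ)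
    (A : Matrix (Fin k) ι F) (hA : A.rank = k)
    (wt : ι → ℕ) (hwt : Function.Injective wt) :
    ∃! S : Finset ι, S.card = k ∧ nonzeroMinor A S ∧
      ∀ S' : Finset ι, S'.card = k → nonzeroMinor A S' → wtSet wt S' ≤ wtSet wt S := by
  classical
  obtain ⟨S0, hS0card, hS0m⟩ := exists_nonzeroMinor A hA
  set C : Finset (Finset ι) :=
    Finset.univ.filter (fun S => S.card = k ∧ nonzeroMinor A S) with hC
  have hS0C : S0 ∈ C := by simp [hC, hS0card, hS0m]
  obtain ⟨S, hSC, hSmax⟩ := Finset.exists_max_image C (wtSet wt) ⟨S0, hS0C⟩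
  have hSP : S.card = k ∧ nonzeroMinor A S := by simpa [hC] using hSC
  have hSmax' : ∀ S' : Finset ι, S'.card = k → nonzeroMinor A S' →
      wtSet wt S' ≤ wtSet wt S := by
    intro S' h1 h2
    exact hSmax S' (by simp [hC, h1, h2])
  refine ⟨S, ⟨hSP.1, hSP.2, hSmax'⟩, ?_⟩
  rintro T ⟨hTcard, hTm, hTmax⟩
  by_contra hne
  -- the symmetric difference is nonempty
  have hD : ((S \ T) ∪ (T \ S)).Nonempty := by
    rw [Finset.nonempty_iff_ne_empty]
    intro h
    apply hne
    have h1 : S \ T = ∅ := Finset.union_eq_empty.mp h |>.1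
    have h2 : T \ S = ∅ := Finset.union_eq_empty.mp h |>.2
    exact Finset.Subset.antisymm (Finset.sdiff_eq_empty_iff_subset.mp h2)
      (Finset.sdiff_eq_empty_iff_subset.mp h1)
  obtain ⟨x, hxD, hxmax⟩ := Finset.exists_max_image _ wt hD
  rcases Finset.mem_union.mp hxD with hx | hx
  · -- x ∈ S \ T : improve T, contradicting maximality of T
    obtain ⟨hxS, hxT⟩ := Finset.mem_sdiff.mp hx
    obtain ⟨y, hyT, hyS, hcard', hm'⟩ :=
      exchange_lemma A S T hSP.1 hSP.2 hTcard hTm x hxS hxT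
    have hwtlt : wt y < wt x := by
      have hle : wt y ≤ wt x := hxmax y (Finset.mem_union_right _ (Finset.mem_sdiff.mpr ⟨hyT, hyS⟩))
      rcases lt_or_eq_of_le hle with h | h
      · exact h
      · exact absurd (hwt h) (fun hyx => hxT (hyx ▸ hyT))
    have := wtSet_lt_exchange wt hwt T x y hyT hxT hwtlt
    exact absurd (hTmax _ hcard' hm') (not_le.mpr this)
  · -- x ∈ T \ S : improve S, contradicting maximality of S
    obtain ⟨hxT, hxS⟩ := Finset.mem_sdiff.mp hx
    obtain ⟨y, hyS, hyT, hcard', hm'⟩ :=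
      exchange_lemma A T S hTcard hTm hSP.1 hSP.2 x hxT hxS
    have hwtlt : wt y < wt x := by
      have hle : wt y ≤ wt x := hxmax y (Finset.mem_union_left _ (Finset.mem_sdiff.mpr ⟨hyS, hyT⟩))
      rcases lt_or_eq_of_le hle with h | h
      · exact h
      · exact absurd (hwt h) (fun hyx => hxS (hyx ▸ hyS))
    have := wtSet_lt_exchange wt hwt S x y hyS hxS hwtlt
    exact absurd (hSmax' _ hcard' hm') (not_le.mpr this)
end

section
/- Let A be a matrix over a field F with k rows and columns indexed by the exponent vectors e ∈ ℕ^n with 1 ≤ |e| ≤ D, and suppose A has rank k over F. Let w: {1,…,n} → ℕ be such that the weights wt(e) = Σ_{i=1}^n w(i)·e_i are distinct for distinct exponent vectors e with |e| ≤ D. Let M_Φ be the matrix over F[s] (s a formal variable) whose rows are indexed by the same exponent vectors e and whose columns are indexed by pairs (i,d) with i ∈ {1,…,k} and 1 ≤ d ≤ D, with entry M_Φ(e,(i,d)) = s^{i·wt(e)} if |e| = d and 0 otherwise. Then the rank of A·M_Φ over the rational function field F(s) equals k. -/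
open Polynomial Matrix


lemma perm_eq_one_of_strictMono {k : ℕ} (σ : Equiv.Perm (Fin k)) (h : StrictMono (σ : Fin k → Fin k)) : σ = 1 := by
  haveI : WellFoundedLT (Fin k) := inferInstance
  have h2 : StrictMono ((σ⁻¹ : Equiv.Perm (Fin k)) : Fin k → Fin k) := by
    intro a b hab
    rcases lt_trichotomy ((σ⁻¹ : Equiv.Perm (Fin k)) a) ((σ⁻¹ : Equiv.Perm (Fin k)) b) with h'|h'|h'
    · exact h'
    · exact absurd (by simpa using congrArg σ h') (by simp [hab.ne])
    · exact absurd (by simpa using h h') (by simp [hab.le, not_lt])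
  ext i
  have ha : i ≤ σ i := StrictMono.le_apply h
  have hb : σ i ≤ i := by
    have := StrictMono.le_apply h2 (x := σ i)
    simpa using this
  have : σ i = i := le_antisymm hb ha
  simp [this]

lemma rearr {k : ℕ} (W : Fin k → ℕ) (hW : StrictMono W) (σ : Equiv.Perm (Fin k)) (hσ : σ ≠ 1) :
    ∑ i, (i.1 + 1) * W (σ i) < ∑ i, (i.1 + 1) * W i := by
  have key : ∑ i, ((i.1 + 1 : ℤ)) • (W (σ i) : ℤ) < ∑ i, ((i.1 + 1 : ℤ)) • ((W i : ℤ)) := by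
    have hfg : Monovary (fun i : Fin k => (i.1 + 1 : ℤ)) (fun i => (W i : ℤ)) := by
      intro i j hij
      simp only at hij ⊢
      have : W i < W j := by exact_mod_cast hij
      have := hW.lt_iff_lt.mp this
      omega
    rw [Monovary.sum_smul_comp_perm_lt_sum_smul_iff hfg]
    intro hmono
    apply hσ
    apply perm_eq_one_of_strictMono
    intro a b hab
    rcases lt_trichotomy (σ a) (σ b) with h'|h'|h'
    · exact h'
    · exact absurd (σ.injective h') hab.ne
    · have hlt : (W (σ b) : ℤ) < W (σ a) := by exact_mod_cast hW h'
      have := hmono (i := b) (j := a) hlt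
      simp only [Fin.val_fin_le] at this
      omega
  have : ∑ i, ((i.1 + 1) * W (σ i) : ℤ) < ∑ i, ((i.1 + 1) * W i : ℤ) := by
    simpa [smul_eq_mul] using key
  exact_mod_cast this


lemma echelon {E : Type*} [Fintype E] {F : Type*} [Field F] (wt : E → ℕ)
    (hinj : Function.Injective wt) :
    ∀ (k : ℕ) (v : Fin k → (E → F)), LinearIndependent F v →
    ∃ (u : Fin k → (E → F)) (l : Fin k → E),
      (∀ j, u j ∈ Submodule.span F (Set.range v)) ∧
      StrictMono (fun j => wt (l j)) ∧
      (∀ j, u j (l j) ≠ 0) ∧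
      (∀ j e, wt (l j) < wt e → u j e = 0) := by
  intro k
  induction k with
  | zero =>
    intro v _
    exact ⟨v, fun j => j.elim0, fun j => j.elim0, fun a => a.elim0,
      fun j => j.elim0, fun j => j.elim0⟩
  | succ k ih =>
    intro v hv
    classical
    -- leads of each row
    have hex : ∀ j, ∃ e, v j e ≠ 0 ∧ ∀ e', v j e' ≠ 0 → wt e' ≤ wt e := by
      intro j
      have hne : (Finset.univ.filter (fun e => v j e ≠ 0)).Nonempty := by
        have := hv.ne_zero j
        rw [Function.ne_iff] at this
        obtain ⟨e, he⟩ := this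
        exact ⟨e, by simpa using he⟩
      obtain ⟨e, he, hmax⟩ := Finset.exists_max_image _ wt hne
      refine ⟨e, (Finset.mem_filter.mp he).2, fun e' h' => hmax e' ?_⟩
      simp [h']
    choose L hL1 hL2 using hex
    obtain ⟨js, -, hjmax⟩ := Finset.exists_max_image Finset.univ
      (fun j => wt (L j)) ⟨0, Finset.mem_univ 0⟩
    simp only [Finset.mem_univ, forall_true_left] at hjmax
    set c := v js (L js) with hc
    have hc0 : c ≠ 0 := hL1 js
    set v' : Fin k → E → F :=
      fun i => v (js.succAbove i) - (v (js.succAbove i) (L js) / c) • v js with hv'def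
    -- vanishing above the max lead
    have hvanish : ∀ i e, wt (L js) ≤ wt e → v' i e = 0 := by
      intro i e he
      rcases eq_or_lt_of_le he with heq | hlt
      · have : e = L js := hinj heq.symm
        subst this
        simp [hv'def, div_mul_cancel₀, hc0, ← hc]
      · have h1 : v (js.succAbove i) e = 0 := by
          by_contra h
          exact absurd ((hL2 _ _ h).trans (hjmax _)) (not_le.mpr hlt)
        have h2 : v js e = 0 := by
          by_contra h
          exact absurd ((hL2 _ _ h).trans (hjmax _)) (not_le.mpr hlt)
        simp [hv'def, h1, h2]
    -- linear independence of v'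
    have hv' : LinearIndependent F v' := by
      rw [Fintype.linearIndependent_iff]
      intro g hg
      set G : Fin (k + 1) → F :=
        js.insertNth (-∑ i, g i * (v (js.succAbove i) (L js) / c)) g with hG
      have hsum : ∑ j, G j • v j = 0 := by
        rw [Fin.sum_univ_succAbove (fun j => G j • v j) js]
        simp only [hG, Fin.insertNth_apply_same, Fin.insertNth_apply_succAbove]
        calc (-∑ i, g i * (v (js.succAbove i) (L js) / c)) • v js
              + ∑ i, g i • v (js.succAbove i)
            = ∑ i, g i • (v (js.succAbove i)
                - (v (js.succAbove i) (L js) / c) • v js) := by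
              simp only [smul_sub, smul_smul, Finset.sum_sub_distrib, ← Finset.sum_smul,
                neg_smul]
              abel
          _ = 0 := hg
      have hG0 := Fintype.linearIndependent_iff.mp hv G hsum
      intro i
      have := hG0 (js.succAbove i)
      simpa [hG, Fin.insertNth_apply_succAbove] using this
    obtain ⟨u', l', hspan', hmono', hne', hvan'⟩ := ih v' hv'
    -- all leads of the span of v' are below wt (L js)
    have hlead' : ∀ i, wt (l' i) < wt (L js) := by
      intro i
      set S : Submodule F (E → F) :=
        { carrier := {f | ∀ e, wt (L js) ≤ wt e → f e = 0}
          add_mem' := by intro a b ha hb e he; simp [ha e he, hb e he]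
          zero_mem' := by intro e he; simp
          smul_mem' := by intro r a ha e he; simp [ha e he] } with hS
      have hmem : u' i ∈ S := by
        refine Submodule.span_le.mpr ?_ (hspan' i)
        rintro f ⟨i', rfl⟩
        exact fun e he => hvanish i' e he
      by_contra h
      exact hne' i (hmem (l' i) (not_lt.mp h))
    refine ⟨Fin.snoc u' (v js), Fin.snoc l' (L js), ?_, ?_, ?_, ?_⟩
    · intro j
      refine Fin.lastCases ?_ ?_ j
      · simp only [Fin.snoc_last]
        exact Submodule.subset_span ⟨js, rfl⟩
      · intro i
        simp only [Fin.snoc_castSucc]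
        refine Submodule.span_le.mpr ?_ (hspan' i)
        rintro f ⟨i', rfl⟩
        refine sub_mem (Submodule.subset_span ⟨js.succAbove i', rfl⟩)
          (Submodule.smul_mem _ _ (Submodule.subset_span ⟨js, rfl⟩))
    · intro a b hab
      rcases Fin.eq_castSucc_or_eq_last b with ⟨b', rfl⟩ | rfl
      · rcases Fin.eq_castSucc_or_eq_last a with ⟨a', rfl⟩ | rfl
        · simp only [Fin.snoc_castSucc]
          exact hmono' (Fin.castSucc_lt_castSucc_iff.mp hab)
        · exact absurd hab (asymm (Fin.castSucc_lt_last b'))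
      · rcases Fin.eq_castSucc_or_eq_last a with ⟨a', rfl⟩ | rfl
        · simp only [Fin.snoc_castSucc, Fin.snoc_last]
          exact hlead' a'
        · exact absurd hab (lt_irrefl _)
    · intro j
      refine Fin.lastCases ?_ ?_ j
      · simpa [Fin.snoc_last] using hc0
      · intro i
        simpa [Fin.snoc_castSucc] using hne' i
    · intro j
      refine Fin.lastCases ?_ ?_ j
      · intro e he
        simp only [Fin.snoc_last] at he ⊢
        by_contra h
        exact absurd (hL2 js e h) (not_le.mpr he)
      · intro i e he
        simp only [Fin.snoc_castSucc] at he ⊢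
        exact hvan' i e he

lemma det_aux {E : Type*} [Fintype E] {F : Type*} [Field F] (wt : E → ℕ)
    (hinj : Function.Injective wt) {k : ℕ} (u : Fin k → E → F) (l : Fin k → E)
    (hmono : StrictMono (fun j => wt (l j)))
    (hne : ∀ j, u j (l j) ≠ 0)
    (hvan : ∀ j e, wt (l j) < wt e → u j e = 0) :
    (Matrix.of fun j i : Fin k =>
      ∑ e, Polynomial.C (u j e) * Polynomial.X ^ ((i.1 + 1) * wt e)).det ≠ 0 := by
  classical
  set W : Fin k → ℕ := fun j => wt (l j) with hW
  set B : Matrix (Fin k) (Fin k) F[X] := Matrix.of fun j i : Fin k =>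
    ∑ e, Polynomial.C (u j e) * Polynomial.X ^ ((i.1 + 1) * wt e) with hB
  have hcoeff : ∀ j i : Fin k, (B j i).coeff ((i.1 + 1) * W j) = u j (l j) := by
    intro j i
    rw [hB]
    simp only [Matrix.of_apply, Polynomial.finset_sum_coeff, Polynomial.coeff_C_mul,
      Polynomial.coeff_X_pow]
    rw [Finset.sum_eq_single (l j)]
    · simp [hW]
    · intro e _ hel
      have : ¬ ((i.1 + 1) * W j = (i.1 + 1) * wt e) := by
        intro h
        exact hel (hinj (Nat.eq_of_mul_eq_mul_left (Nat.succ_pos _) h).symm)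
      simp [this]
    · intro h
      exact absurd (Finset.mem_univ _) h
  have hcoeff0 : ∀ (j i : Fin k) (m : ℕ), (i.1 + 1) * W j < m → (B j i).coeff m = 0 := by
    intro j i m hm
    rw [hB]
    simp only [Matrix.of_apply, Polynomial.finset_sum_coeff, Polynomial.coeff_C_mul,
      Polynomial.coeff_X_pow]
    apply Finset.sum_eq_zero
    intro e _
    by_cases h : m = (i.1 + 1) * wt e
    · have : W j < wt e := by
        have := h ▸ hm
        exact lt_of_mul_lt_mul_left this (Nat.zero_le _)
      simp [hvan j e this]
    · simp [h]
  have hBne : ∀ j i : Fin k, B j i ≠ 0 := by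
    intro j i h
    apply hne j
    rw [← hcoeff j i, h, Polynomial.coeff_zero]
  have hdeg : ∀ j i : Fin k, (B j i).natDegree = (i.1 + 1) * W j := by
    intro j i
    refine le_antisymm ?_ ?_
    · exact Polynomial.natDegree_le_iff_coeff_eq_zero.mpr (hcoeff0 j i)
    · exact Polynomial.le_natDegree_of_ne_zero (by rw [hcoeff j i]; exact hne j)
  have hlead : ∀ j i : Fin k, (B j i).leadingCoeff = u j (l j) := by
    intro j i
    rw [Polynomial.leadingCoeff, hdeg j i, hcoeff j i]
  -- the key coefficient of the determinant
  have hdet : (B.det).coeff (∑ j, (j.1 + 1) * W j) = ∏ j, u j (l j) := by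
    rw [Matrix.det_apply]
    rw [Polynomial.finset_sum_coeff]
    rw [Finset.sum_eq_single (1 : Equiv.Perm (Fin k))]
    · simp only [Equiv.Perm.sign_one, one_smul, Equiv.Perm.one_apply]
      have hd : (∏ i, B i i).natDegree = ∑ j, (j.1 + 1) * W j := by
        rw [Polynomial.natDegree_prod _ _ (fun i _ => hBne i i)]
        exact Finset.sum_congr rfl fun i _ => hdeg i i
      rw [← hd, Polynomial.coeff_natDegree, Polynomial.leadingCoeff_prod]
      exact Finset.prod_congr rfl fun i _ => hlead i i
    · intro σ _ hσ
      rw [Units.smul_def, Polynomial.coeff_smul]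
      have hdlt : (∏ i, B (σ i) i).natDegree < ∑ j, (j.1 + 1) * W j := by
        rw [Polynomial.natDegree_prod _ _ (fun i _ => hBne (σ i) i)]
        calc ∑ i, (B (σ i) i).natDegree = ∑ i, (i.1 + 1) * W (σ i) :=
              Finset.sum_congr rfl fun i _ => hdeg (σ i) i
          _ < ∑ j, (j.1 + 1) * W j := rearr W hmono σ hσ
      rw [Polynomial.coeff_eq_zero_of_natDegree_lt hdlt, smul_zero]
    · intro h
      exact absurd (Finset.mem_univ _) h
  intro h
  have : (∏ j, u j (l j)) = 0 := by rw [← hdet, h, Polynomial.coeff_zero]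
  obtain ⟨j, -, hj⟩ := Finset.prod_eq_zero_iff.mp this
  exact hne j hj

lemma main_aux {E : Type*} [Fintype E] {F : Type*} [Field F] (k D : ℕ)
    (A : Matrix (Fin k) E F)
    (hrows : LinearIndependent F (fun j : Fin k => A j))
    (wt : E → ℕ) (hinj : Function.Injective wt)
    (deg : E → ℕ) (hdeg : ∀ e, 1 ≤ deg e ∧ deg e ≤ D) :
    ((A.map (algebraMap F (RatFunc F))) *
      (Matrix.of fun (e : E) (p : Fin k × Fin D) =>
        if deg e = p.2.1 + 1 then
          algebraMap (Polynomial F) (RatFunc F) (X ^ ((p.1.1 + 1) * wt e))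
        else 0)).rank = k := by
  classical
  set K := RatFunc F with hK
  set φ : Polynomial F →+* K := (algebraMap (Polynomial F) K : Polynomial F →+* K) with hφ
  obtain ⟨u, l, hspan, hmono, hne, hvan⟩ := echelon wt hinj k (fun j => A j) hrows
  have hPex : ∀ j, ∃ c : Fin k → F, ∑ i, c i • A i = u j := by
    intro j
    exact (Submodule.mem_span_range_iff_exists_fun F).mp (hspan j)
  choose P hP using hPex
  set M : Matrix E (Fin k × Fin D) K := Matrix.of fun (e : E) (p : Fin k × Fin D) =>
        if deg e = p.2.1 + 1 then φ (X ^ ((p.1.1 + 1) * wt e)) else 0 with hM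
  set C : Matrix (Fin k × Fin D) (Fin k) K := Matrix.of fun p i =>
        if p.1 = i then 1 else 0 with hC
  set N : Matrix E (Fin k) K := Matrix.of fun (e : E) (i : Fin k) =>
        φ (X ^ ((i.1 + 1) * wt e)) with hN
  set A' : Matrix (Fin k) E K := A.map (algebraMap F K) with hA'
  set Pk : Matrix (Fin k) (Fin k) K :=
    (Matrix.of P : Matrix (Fin k) (Fin k) F).map (algebraMap F K) with hPk
  have hMC : M * C = N := by
    ext e i
    rw [Matrix.mul_apply]
    have hS := hdeg e
    have hd0 : deg e - 1 < D := by omega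
    rw [Finset.sum_eq_single ((i, ⟨deg e - 1, hd0⟩) : Fin k × Fin D)]
    · simp only [hM, hC, hN, Matrix.of_apply]
      have hcond : deg e = deg e - 1 + 1 := by omega
      rw [if_pos hcond]
      simp
    · intro p _ hp
      simp only [hM, hC, Matrix.of_apply]
      by_cases h1 : p.1 = i
      · have h2 : ¬ (deg e = p.2.1 + 1) := by
          intro h
          apply hp
          have h3 : p.2 = (⟨deg e - 1, hd0⟩ : Fin D) := by
            apply Fin.ext
            simp only
            omega
          rw [Prod.ext_iff]
          exact ⟨h1, h3⟩
        simp [h2]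
      · simp [h1]
    · intro h
      exact absurd (Finset.mem_univ _) h
  set B0 : Matrix (Fin k) (Fin k) (Polynomial F) := Matrix.of fun j i : Fin k =>
      ∑ e, Polynomial.C (u j e) * Polynomial.X ^ ((i.1 + 1) * wt e) with hB0
  have hPAN : Pk * (A' * N) = B0.map φ := by
    ext j i
    rw [Matrix.mul_apply]
    simp only [hPk, hA', hN, hB0, Matrix.map_apply, Matrix.of_apply, Matrix.mul_apply]
    rw [map_sum φ]
    have step : ∀ t : Fin k, (algebraMap F K) (P j t) *
        (∑ e, (algebraMap F K) (A t e) * φ (X ^ ((i.1 + 1) * wt e)))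
        = ∑ e, (algebraMap F K) (P j t * A t e) * φ (X ^ ((i.1 + 1) * wt e)) := by
      intro t
      rw [Finset.mul_sum]
      refine Finset.sum_congr rfl fun e _ => ?_
      rw [_root_.map_mul, mul_assoc]
    simp_rw [step]
    rw [Finset.sum_comm]
    refine Finset.sum_congr rfl fun e _ => ?_
    rw [_root_.map_mul φ, ← Finset.sum_mul]
    congr 1
    have := congrFun (hP j) e
    simp only [Finset.sum_apply, Pi.smul_apply, smul_eq_mul] at this
    rw [← map_sum, this]
    rw [IsScalarTower.algebraMap_apply F (Polynomial F) K, Polynomial.algebraMap_eq]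
  have hdet0 : B0.det ≠ 0 := det_aux wt hinj u l hmono hne hvan
  have hmapdet : φ B0.det = (B0.map φ).det := by
    rw [RingHom.map_det, RingHom.mapMatrix_apply]
  have hdet : (Pk * (A' * N)).det ≠ 0 := by
    rw [hPAN, ← hmapdet]
    intro h
    exact hdet0 (IsFractionRing.injective (Polynomial F) K (h.trans (map_zero φ).symm))
  have hrank1 : (Pk * (A' * N)).rank = k := by
    rw [Matrix.rank_of_isUnit _ ((Matrix.isUnit_iff_isUnit_det _).mpr
      (isUnit_iff_ne_zero.mpr hdet)), Fintype.card_fin]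
  refine le_antisymm ?_ ?_
  · have := (A' * M).rank_le_card_height
    simpa using this
  · calc k = (Pk * (A' * N)).rank := hrank1.symm
      _ ≤ (A' * N).rank := Matrix.rank_mul_le_right _ _
      _ = ((A' * M) * C).rank := by rw [← hMC, Matrix.mul_assoc]
      _ ≤ (A' * M).rank := Matrix.rank_mul_le_left _ _

/-- **Rank condenser.**  Let `A` be a `k`-row matrix over a field `F` whose columns are
indexed by the exponent vectors `e ∈ ℕ^n` with `1 ≤ |e| ≤ D` (faithfully encoded here as
functions `Fin n → Fin (D+1)`, since every such vector has all entries at most `D`), and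
suppose `A` has rank `k`.  Let `w : Fin n → ℕ` be such that the weights
`wt(e) = ∑ i, w i * e i` are distinct for distinct exponent vectors of degree at most `D`.
Let `M_Φ` be the matrix over `F[s]` with rows indexed by the same exponent vectors and
columns indexed by pairs `(i, d)` with `i ∈ {1,…,k}` and `1 ≤ d ≤ D` (encoded as
`Fin k × Fin D`, the pair `(i,d)` corresponding to `(i.1+1, d.1+1)`), whose entry at
`(e, (i,d))` is `s^{i·wt(e)}` if `|e| = d` and `0` otherwise.  Then the rank of `A · M_Φ`
over the rational function field `F(s)` equals `k`. -/
theorem rank_condenser (F : Type*) [Field F] (n k D : ℕ)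
    (A : Matrix (Fin k)
      {e : Fin n → Fin (D + 1) // 1 ≤ ∑ i, (e i : ℕ) ∧ ∑ i, (e i : ℕ) ≤ D} F)
    (hA : A.rank = k)
    (w : Fin n → ℕ)
    (hw : ∀ e e' : Fin n → Fin (D + 1), (∑ i, (e i : ℕ)) ≤ D → (∑ i, (e' i : ℕ)) ≤ D →
      (∑ i, w i * (e i : ℕ)) = (∑ i, w i * (e' i : ℕ)) → e = e') :
    ((A.map (algebraMap F (RatFunc F))) *
      (Matrix.of fun (e : {e : Fin n → Fin (D + 1) // 1 ≤ ∑ i, (e i : ℕ) ∧ ∑ i, (e i : ℕ) ≤ D})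
          (p : Fin k × Fin D) =>
        if (∑ i, ((e : Fin n → Fin (D + 1)) i : ℕ)) = p.2.1 + 1 then
          algebraMap (Polynomial F) (RatFunc F)
            (X ^ ((p.1.1 + 1) * ∑ i, w i * ((e : Fin n → Fin (D + 1)) i : ℕ)))
        else 0)).rank = k := by
  classical
  have hrows : LinearIndependent F (fun j : Fin k => A j) := by
    rw [linearIndependent_iff_card_eq_finrank_span, Fintype.card_fin]
    have h2 := Matrix.rank_eq_finrank_span_cols (Matrix.transpose A)
    rw [Matrix.rank_transpose, hA] at h2
    show k = Module.finrank F (Submodule.span F (Set.range fun j => A j))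
    exact h2
  exact main_aux k D A hrows
    (fun e => ∑ i, w i * ((e : Fin n → Fin (D + 1)) i : ℕ))
    (fun e e' h => Subtype.ext (hw _ _ e.2.2 e'.2.2 h))
    (fun e => ∑ i, ((e : Fin n → Fin (D + 1)) i : ℕ))
    (fun e => e.2)
end

section
/- Let F be an algebraically closed field and K an extension field of F. Let g_1,…,g_k ∈ K[y_1,…,y_n] be F-algebraically dependent, i.e., there is a nonzero A ∈ F[z_1,…,z_k] with A(g_1,…,g_k) = 0. Let v = (v_1,…,v_n) be fresh variables and, for a positive integer t, set H_t(g_i) ∈ K[v][y] to be the truncation to y-degree at most t of g_i(y+v) − g_i(v). Then for every positive integer t there exist α_1,…,α_k, not all zero, in the subfield F(g_1(v),…,g_k(v)) of K(v) generated over F by g_1(v),…,g_k(v), such that Σ_{i=1}^k α_i · H_t(g_i) ≡ 0 modulo the F(g_1(v),…,g_k(v))-linear span of all products H_t(g_{i_1})⋯H_t(g_{i_r}) with r ≥ 2 plus the ideal ⟨y_1,…,y_n⟩^{t+1}. -/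
noncomputable section

/-- The (total) degree of a monomial `m`, i.e. `|m| = ∑ i, m i`. -/
def mdeg {σ : Type*} (m : σ →₀ ℕ) : ℕ := m.sum fun _ e => e

/-- Truncation of a multivariate polynomial keeping exactly the terms of total degree
between `1` and `t`. -/
def truncLE {σ A : Type*} [CommSemiring A] (t : ℕ) (p : MvPolynomial σ A) :
    MvPolynomial σ A :=
  ∑ m ∈ p.support.filter (fun m => 1 ≤ mdeg m ∧ mdeg m ≤ t),
    MvPolynomial.monomial m (MvPolynomial.coeff m p)

/-- `Ht t g` is `H_t(g)`: the truncation to degree at most `t` (in the original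
variables `y`) of `g(y + v) − g(v)`, viewed as an element of `A[v][y]`.  Here the fresh
variables `v` are indexed by the same index set and live in the coefficient ring, the
substitution `y_j ↦ y_j + v_j` being `X j + C (X j)`, and `g(v)` being `C g`. -/
def Ht {n : ℕ} {A : Type*} [CommRing A] (t : ℕ) (g : MvPolynomial (Fin n) A) :
    MvPolynomial (Fin n) (MvPolynomial (Fin n) A) :=
  truncLE t
    (MvPolynomial.eval₂ ((MvPolynomial.C).comp (MvPolynomial.C))
      (fun j => MvPolynomial.X j + MvPolynomial.C (MvPolynomial.X j)) g
      - MvPolynomial.C g)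


section Helpers
open MvPolynomial Finsupp

variable {σ : Type*}

lemma mdeg_add (a b : σ →₀ ℕ) : mdeg (a + b) = mdeg a + mdeg b :=
  Finsupp.sum_add_index' (fun _ => rfl) (fun _ _ _ => rfl)

lemma mdeg_single (i : σ) (n : ℕ) : mdeg (Finsupp.single i n) = n :=
  Finsupp.sum_single_index rfl

@[simp] lemma mdeg_zero : mdeg (0 : σ →₀ ℕ) = 0 := by simp [mdeg]

lemma mdeg_eq_zero {m : σ →₀ ℕ} (h : mdeg m = 0) : m = 0 := by
  have h' : ∀ x ∈ m.support, m x = 0 := by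
    intro x hx
    have : ∑ x ∈ m.support, m x = 0 := h
    exact (Finset.sum_eq_zero_iff.mp this) x hx
  ext x
  by_cases hx : x ∈ m.support
  · exact h' x hx
  · simpa using Finsupp.notMem_support_iff.mp hx

lemma mdeg_eq_one {m : σ →₀ ℕ} (h : mdeg m = 1) : ∃ i, m = Finsupp.single i 1 := by
  classical
  have hne : m ≠ 0 := by
    rintro rfl; simp at h
  obtain ⟨i, hi⟩ := Finsupp.support_nonempty_iff.mpr hne
  have hsum : ∑ x ∈ m.support, m x = 1 := h
  have hmi : 1 ≤ m i := Nat.one_le_iff_ne_zero.mpr (Finsupp.mem_support_iff.mp hi)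
  have hle : m i ≤ 1 := hsum ▸ Finset.single_le_sum (fun _ _ => Nat.zero_le _) hi
  refine ⟨i, ?_⟩
  ext x
  rcases eq_or_ne x i with rfl | hx
  · simp; omega
  · rw [Finsupp.single_eq_of_ne' (Ne.symm hx)]
    by_contra hmx
    have hxs : x ∈ m.support := Finsupp.mem_support_iff.mpr hmx
    have : m i + m x ≤ ∑ x ∈ m.support, m x := by
      rw [← Finset.sum_pair (Ne.symm hx)]
      exact Finset.sum_le_sum_of_subset (by intro y hy; simp at hy; rcases hy with rfl|rfl <;> assumption)
    omega

variable {R : Type*} [CommSemiring R]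

lemma coeff_pderiv' (i : σ) (m : σ →₀ ℕ) (q : MvPolynomial σ R) :
    coeff m (pderiv i q) = coeff (m + Finsupp.single i 1) q * ((m i : R) + 1) := by
  classical
  induction q using MvPolynomial.induction_on' with
  | monomial u a =>
      rw [pderiv_monomial, coeff_monomial, coeff_monomial]
      by_cases hu : u = m + Finsupp.single i 1
      · subst hu
        rw [if_pos (add_tsub_cancel_right _ _), if_pos rfl]
        push_cast [Finsupp.add_apply, Finsupp.single_eq_same]
        ring
      · rw [if_neg hu]
        by_cases hs : u - Finsupp.single i 1 = m
        · rw [if_pos hs]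
          have hui : u i = 0 := by
            by_contra hcon
            apply hu
            have h1 : Finsupp.single i 1 ≤ u := by
              rw [Finsupp.single_le_iff]; omega
            rw [← hs, tsub_add_cancel_of_le h1]
          simp [hui]
        · rw [if_neg hs, zero_mul]
  | add p q hp hq => simp [hp, hq, add_mul]

lemma totalDegree_pderiv_lt {i : σ} {A : MvPolynomial σ R} (h : pderiv i A ≠ 0) :
    (pderiv i A).totalDegree < A.totalDegree := by
  classical
  have hd1 : 1 ≤ A.totalDegree := by
    by_contra hcon
    have h0 : A.totalDegree = 0 := by omega
    apply h
    ext m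
    rw [coeff_pderiv', coeff_zero]
    have : m + Finsupp.single i 1 ∉ A.support := by
      intro hmem
      have := ((totalDegree_eq_zero_iff _ A).mp h0) _ hmem i
      simp [Finsupp.add_apply] at this
    rw [MvPolynomial.notMem_support_iff.mp this, zero_mul]
  have hle : (pderiv i A).totalDegree ≤ A.totalDegree - 1 := by
    conv_lhs => rw [A.as_sum]
    rw [map_sum]
    refine (totalDegree_finset_sum _ _).trans (Finset.sup_le fun m hm => ?_)
    rw [pderiv_monomial]
    by_cases hmi : m i = 0
    · simp [hmi]
    · refine (totalDegree_monomial_le _ _).trans ?_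
      have hrep : Finsupp.single i 1 + (m - Finsupp.single i 1) = m := by
        rw [add_comm, tsub_add_cancel_of_le (Finsupp.single_le_iff.mpr (by omega))]
      have hmd : mdeg m ≤ A.totalDegree := le_totalDegree hm
      have : mdeg (Finsupp.single i 1) + mdeg (m - Finsupp.single i 1) = mdeg m := by
        rw [← mdeg_add, hrep]
      rw [mdeg_single] at this
      show mdeg (m - Finsupp.single i 1) ≤ _
      omega
  omega

lemma eq_C_of_support_subset {A : MvPolynomial σ R} (h : ∀ m ∈ A.support, m = 0) :
    A = C (coeff 0 A) := by
  classical
  ext m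
  rcases eq_or_ne m 0 with rfl | hm
  · simp
  · rw [coeff_C, if_neg (Ne.symm hm)]
    by_contra hc
    exact hm (h m (MvPolynomial.mem_support_iff.mpr hc))

end Helpers

section Annihilator
open MvPolynomial

lemma exists_good_annihilator (F : Type*) [Field F] [IsAlgClosed F] {R : Type*} [CommRing R]
    [IsDomain R] [Algebra F R] {k : ℕ} (g : Fin k → R) (hdep : ¬ AlgebraicIndependent F g) :
    ∃ A : MvPolynomial (Fin k) F, A ≠ 0 ∧ aeval g A = 0 ∧
      ∃ i, aeval g (pderiv i A) ≠ 0 := by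
  classical
  rw [algebraicIndependent_iff] at hdep
  push_neg at hdep
  obtain ⟨A₀, hA₀ann, hA₀ne⟩ := hdep
  have hconst : ∀ B : MvPolynomial (Fin k) F, B ≠ 0 → aeval g B = 0 →
      ¬ (∀ m ∈ B.support, m = 0) := by
    intro B hB hBann hsup
    have hBC : B = C (coeff 0 B) := eq_C_of_support_subset hsup
    rw [hBC, aeval_C] at hBann
    have : coeff 0 B = 0 := (algebraMap F R).injective (by simpa using hBann)
    rw [this, map_zero] at hBC
    exact hB hBC
  suffices H : ∀ d (A : MvPolynomial (Fin k) F), A.totalDegree ≤ d → A ≠ 0 → aeval g A = 0 →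
      ∃ A', A' ≠ 0 ∧ aeval g A' = 0 ∧ ∃ i, aeval g (pderiv i A') ≠ 0 from
    H _ A₀ le_rfl hA₀ne hA₀ann
  intro d
  induction d using Nat.strong_induction_on with
  | _ d IH =>
    intro A hdeg hAne hAann
    by_cases hder : ∃ i, aeval g (pderiv i A) ≠ 0
    · exact ⟨A, hAne, hAann, hder⟩
    push_neg at hder
    by_cases hpd : ∃ i, pderiv i A ≠ 0
    · obtain ⟨i, hi⟩ := hpd
      exact IH (pderiv i A).totalDegree (lt_of_lt_of_le (totalDegree_pderiv_lt hi) hdeg)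
        _ le_rfl hi (hder i)
    push_neg at hpd
    -- all partial derivatives vanish
    have hcast : ∀ m ∈ A.support, ∀ i, ((m i : F)) = 0 := by
      intro m hm i
      have hmi : m i = 0 ∨ 1 ≤ m i := by omega
      rcases hmi with hmi | hmi
      · simp [hmi]
      · set m' := m - Finsupp.single i 1 with hm'
        have h1 : Finsupp.single i 1 ≤ m := Finsupp.single_le_iff.mpr hmi
        have hrep : m' + Finsupp.single i 1 = m := tsub_add_cancel_of_le h1
        have hcder := coeff_pderiv' i m' A
        rw [hpd i, coeff_zero, hrep] at hcder
        have hc : coeff m A ≠ 0 := MvPolynomial.mem_support_iff.mp hm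
        have hnat : m' i + 1 = m i := by
          have h2 : m' i = m i - 1 := by
            rw [hm', Finsupp.tsub_apply, Finsupp.single_eq_same]
          omega
        have hval : (m i : F) = (m' i : F) + 1 := by rw [← hnat]; push_cast; ring
        rw [hval]
        rcases mul_eq_zero.mp hcder.symm with h | h
        · exact absurd h hc
        · exact h
    obtain ⟨p, hp⟩ := CharP.exists F
    rcases CharP.char_is_prime_or_zero F p with hprime | hzero
    · -- characteristic p > 0
      haveI : Fact p.Prime := ⟨hprime⟩
      haveI : ExpChar F p := ExpChar.prime hprime
      haveI : ExpChar (MvPolynomial (Fin k) F) p := ExpChar.prime hprime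
      have hdvd : ∀ m ∈ A.support, ∀ i, p ∣ m i := fun m hm i =>
        (CharP.cast_eq_zero_iff F p (m i)).mp (hcast m hm i)
      set mdiv : (Fin k →₀ ℕ) → (Fin k →₀ ℕ) :=
        fun m => Finsupp.mapRange (· / p) (Nat.zero_div p) m with hmdiv
      set B : MvPolynomial (Fin k) F :=
        ∑ m ∈ A.support, monomial (mdiv m) ((frobeniusEquiv F p).symm (coeff m A)) with hB
      have hBq : B ^ p = A := by
        rw [hB, sum_pow_char]
        conv_rhs => rw [A.as_sum]
        refine Finset.sum_congr rfl fun m hm => ?_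
        have harg : p • mdiv m = m := by
          ext i
          simp only [Finsupp.smul_apply, hmdiv, Finsupp.mapRange_apply, smul_eq_mul]
          exact Nat.mul_div_cancel' (hdvd m hm i)
        rw [monomial_pow, frobeniusEquiv_symm_pow_p, harg]
      have hBne : B ≠ 0 := by
        intro h
        rw [h, zero_pow hprime.ne_zero] at hBq
        exact hAne hBq.symm
      have hBann : aeval g B = 0 := by
        have : (aeval g B) ^ p = 0 := by rw [← map_pow, hBq, hAann]
        exact (pow_eq_zero_iff hprime.ne_zero).mp this
      have hd1 : 1 ≤ A.totalDegree := by
        by_contra hcon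
        refine hconst A hAne hAann fun m hm => ?_
        have h0 : A.totalDegree = 0 := by omega
        have := (totalDegree_eq_zero_iff _ A).mp h0 m hm
        ext i; simp [this i]
      have hBdeg : B.totalDegree ≤ A.totalDegree / p := by
        rw [hB]
        refine (totalDegree_finset_sum _ _).trans (Finset.sup_le fun m hm => ?_)
        refine (totalDegree_monomial_le _ _).trans ?_
        have hsum : (mdiv m).sum (fun _ e => e) = m.sum fun _ e => e / p := by
          rw [hmdiv]
          exact Finsupp.sum_mapRange_index fun _ => rfl
        have hmul : p * (m.sum fun _ e => e / p) = m.sum fun _ e => e := by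
          rw [Finsupp.sum, Finsupp.sum, Finset.mul_sum]
          exact Finset.sum_congr rfl fun i hi => Nat.mul_div_cancel' (hdvd m hm i)
        show (mdiv m).sum (fun _ e => e) ≤ _
        have hmd : (m.sum fun _ e => e) ≤ A.totalDegree := le_totalDegree hm
        rw [hsum]
        have hdivq : (m.sum fun _ e => e / p) = (m.sum fun _ e => e) / p := by
          rw [← hmul, Nat.mul_div_cancel_left _ hprime.pos]
        rw [hdivq]
        exact Nat.div_le_div_right hmd
      have hlt : A.totalDegree / p < d :=
        lt_of_lt_of_le (Nat.div_lt_self (by omega) hprime.one_lt) hdeg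
      exact IH _ hlt B hBdeg hBne hBann
    · -- characteristic zero
      subst hzero
      haveI : CharZero F := CharP.charP_to_charZero F
      exact absurd (fun m hm => by
        ext i
        exact Nat.cast_eq_zero.mp (hcast m hm i)) (hconst A hAne hAann)

end Annihilator

section ShiftIdeal
open MvPolynomial

variable {L : Type*} [CommRing L] {k n : ℕ}

lemma pderiv_aeval_shift (s : Fin k → L) (i : Fin k) (p : MvPolynomial (Fin k) L) :
    pderiv i (aeval (fun j => X j + C (s j)) p) =
      aeval (fun j => X j + C (s j)) (pderiv i p) := by
  classical
  induction p using MvPolynomial.induction_on with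
  | C a =>
      rw [aeval_C, algebraMap_eq, pderiv_C, map_zero]
  | add p q hp hq => simp only [map_add, hp, hq]
  | mul_X p j hp =>
      simp only [map_mul, aeval_X, Derivation.leibniz, smul_eq_mul, map_add, pderiv_X, hp]
      simp only [pderiv_C, pderiv_X, map_zero, add_zero, Pi.single_apply,
        apply_ite (aeval fun j => X j + C (s j)), map_one]

lemma constantCoeff_aeval_shift (s : Fin k → L) (p : MvPolynomial (Fin k) L) :
    constantCoeff (aeval (fun j => X j + C (s j)) p) = eval s p := by
  induction p using MvPolynomial.induction_on with
  | C a => simp only [aeval_C, algebraMap_eq, constantCoeff_C, eval_C]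
  | add p q hp hq => simp only [map_add, hp, hq]
  | mul_X p j hp =>
      simp only [map_mul, aeval_X, map_add, constantCoeff_X, constantCoeff_C, zero_add,
        eval_mul, eval_X, hp]

lemma coeff_truncLE {σ A : Type*} [CommSemiring A] (t : ℕ) (p : MvPolynomial σ A) (m : σ →₀ ℕ) :
    coeff m (truncLE t p) = if 1 ≤ mdeg m ∧ mdeg m ≤ t then coeff m p else 0 := by
  classical
  rw [truncLE, coeff_sum]
  simp only [coeff_monomial]
  rw [Finset.sum_ite_eq' _ m (fun m' => coeff m' p)]
  by_cases hmem : m ∈ p.support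
  · simp [hmem, Finset.mem_filter]
  · rw [if_neg (fun hc => hmem (Finset.mem_filter.mp hc).1)]
    rcases Classical.em (1 ≤ mdeg m ∧ mdeg m ≤ t) with h | h
    · rw [if_pos h, MvPolynomial.notMem_support_iff.mp hmem]
    · rw [if_neg h]

lemma monomial_mem_pow (d : ℕ) (m : Fin n →₀ ℕ) (hm : d ≤ mdeg m) (a : L) :
    monomial m a ∈ (Ideal.span (Set.range (X : Fin n → MvPolynomial (Fin n) L))) ^ d := by
  classical
  induction d generalizing m with
  | zero => simp
  | succ d ih =>
      have hm0 : m ≠ 0 := by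
        rintro rfl; rw [mdeg_zero] at hm; omega
      obtain ⟨i, hi⟩ := Finsupp.support_nonempty_iff.mpr hm0
      have hmi : 1 ≤ m i := Nat.one_le_iff_ne_zero.mpr (Finsupp.mem_support_iff.mp hi)
      have hle : Finsupp.single i 1 ≤ m := Finsupp.single_le_iff.mpr hmi
      have hrep : Finsupp.single i 1 + (m - Finsupp.single i 1) = m := by
        rw [add_comm, tsub_add_cancel_of_le hle]
      have hmon : monomial m a = X i * monomial (m - Finsupp.single i 1) a := by
        have : (X i : MvPolynomial (Fin n) L) = monomial (Finsupp.single i 1) 1 := by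
          rw [← X_pow_eq_monomial, pow_one]
        rw [this, monomial_mul, one_mul, hrep]
      rw [hmon, pow_succ']
      refine Ideal.mul_mem_mul (Ideal.subset_span ⟨i, rfl⟩) (ih _ ?_)
      have : mdeg (Finsupp.single i 1) + mdeg (m - Finsupp.single i 1) = mdeg m := by
        rw [← mdeg_add, hrep]
      rw [mdeg_single] at this
      omega

lemma mem_pow_of_support (d : ℕ) (q : MvPolynomial (Fin n) L)
    (h : ∀ m ∈ q.support, d ≤ mdeg m) :
    q ∈ (Ideal.span (Set.range (X : Fin n → MvPolynomial (Fin n) L))) ^ d := by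
  rw [q.as_sum]
  exact Ideal.sum_mem _ fun m hm => monomial_mem_pow d m (h m hm) _

end ShiftIdeal

section Main
open MvPolynomial
set_option maxHeartbeats 2000000 in
set_option synthInstance.maxHeartbeats 1000000 in

/-- Let `F` be an algebraically closed field, `K` an extension field of `F`, and let
`g_1, …, g_k ∈ K[y_1,…,y_n]` be `F`-algebraically dependent.  Then for every positive
integer `t` there exist `α_1, …, α_k`, not all zero, in the subfield
`F(g_1(v),…,g_k(v))` of `K(v)` generated over `F` by the `g_i(v)`, such that
`∑ i, α_i · H_t(g_i)` lies in the `F(g(v))`-linear span of the products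
`H_t(g_{i_1}) ⋯ H_t(g_{i_r})` with `r ≥ 2` plus the ideal `⟨y_1,…,y_n⟩^{t+1}`.
(The span element is written as `∑ j, c_j · ∏ i, H_t(g_i)^{e_j i}` with coefficients
`c_j` in the subfield and `∑ i, e_j i ≥ 2`.) -/
theorem pss_dependence (F K : Type*) [Field F] [IsAlgClosed F] [Field K] [Algebra F K]
    (n k : ℕ) (g : Fin k → MvPolynomial (Fin n) K)
    (hdep : ¬ AlgebraicIndependent F g) (t : ℕ) (ht : 0 < t) :
    ∃ α : Fin k → FractionRing (MvPolynomial (Fin n) K),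
      α ≠ 0 ∧
      (∀ i, α i ∈ Subfield.closure
        (Set.range ((algebraMap (MvPolynomial (Fin n) K)
              (FractionRing (MvPolynomial (Fin n) K))).comp
            ((MvPolynomial.C : K →+* MvPolynomial (Fin n) K).comp (algebraMap F K))) ∪
          Set.range (fun i => algebraMap (MvPolynomial (Fin n) K)
            (FractionRing (MvPolynomial (Fin n) K)) (g i)))) ∧
      ∃ (M : ℕ) (c : Fin M → FractionRing (MvPolynomial (Fin n) K))
        (e : Fin M → Fin k → ℕ)
        (q : MvPolynomial (Fin n) (FractionRing (MvPolynomial (Fin n) K))),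
        (∀ j, c j ∈ Subfield.closure
          (Set.range ((algebraMap (MvPolynomial (Fin n) K)
                (FractionRing (MvPolynomial (Fin n) K))).comp
              ((MvPolynomial.C : K →+* MvPolynomial (Fin n) K).comp (algebraMap F K))) ∪
            Set.range (fun i => algebraMap (MvPolynomial (Fin n) K)
              (FractionRing (MvPolynomial (Fin n) K)) (g i)))) ∧
        (∀ j, 2 ≤ ∑ i, e j i) ∧
        q ∈ (Ideal.span (Set.range (MvPolynomial.X :
              Fin n → MvPolynomial (Fin n) (FractionRing (MvPolynomial (Fin n) K))))) ^ (t + 1) ∧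
        ∑ i, MvPolynomial.C (α i) *
            MvPolynomial.map (algebraMap (MvPolynomial (Fin n) K)
              (FractionRing (MvPolynomial (Fin n) K))) (Ht t (g i)) =
          ∑ j, MvPolynomial.C (c j) *
              ∏ i, (MvPolynomial.map (algebraMap (MvPolynomial (Fin n) K)
                (FractionRing (MvPolynomial (Fin n) K))) (Ht t (g i))) ^ (e j i)
            + q := by
  classical
  obtain ⟨A, hAne, hAann, i₀, hi₀⟩ := exists_good_annihilator F g hdep
  set ι : MvPolynomial (Fin n) K →+* FractionRing (MvPolynomial (Fin n) K) :=
    algebraMap (MvPolynomial (Fin n) K) (FractionRing (MvPolynomial (Fin n) K)) with hιdef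
  set φ : F →+* FractionRing (MvPolynomial (Fin n) K) :=
    ι.comp ((MvPolynomial.C : K →+* MvPolynomial (Fin n) K).comp (algebraMap F K)) with hφdef
  set s : Fin k → FractionRing (MvPolynomial (Fin n) K) := fun i => ι (g i) with hsdef
  set T : Subfield (FractionRing (MvPolynomial (Fin n) K)) :=
    Subfield.closure (Set.range φ ∪ Set.range s) with hTdef
  have hφT : ∀ x : F, φ x ∈ T := fun x => Subfield.subset_closure (Or.inl ⟨x, rfl⟩)
  have hsT : ∀ i, s i ∈ T := fun i => Subfield.subset_closure (Or.inr ⟨i, rfl⟩)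
  have hφalg : φ = ι.comp (algebraMap F (MvPolynomial (Fin n) K)) := RingHom.ext fun x => rfl
  set B : MvPolynomial (Fin k) (FractionRing (MvPolynomial (Fin n) K)) := eval₂ C (fun j => X j + C (s j)) (map φ A) with hBdef
  have hBaeval : B = aeval (fun j => X j + C (s j)) (map φ A) := by
    rw [aeval_def, MvPolynomial.algebraMap_eq]
  set α : Fin k → FractionRing (MvPolynomial (Fin n) K) := fun i => coeff (Finsupp.single i 1) B with hαdef
  -- coefficients of B lie in T
  have hcoeffT : ∀ m, coeff m B ∈ T := by
    intro m
    set φT : F →+* T := φ.codRestrict T hφT with hφTdef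
    set sT : Fin k → T := fun i => ⟨s i, hsT i⟩ with hsTdef
    set BT : MvPolynomial (Fin k) T := eval₂ C (fun j => X j + C (sT j)) (map φT A) with hBTdef
    have h1 : map T.subtype BT = B := by
      rw [hBTdef, eval₂_comp_left (map T.subtype), eval₂_map, hBdef, eval₂_map]
      have hf : ((map (σ := Fin k) T.subtype).comp (C : T →+* MvPolynomial (Fin k) T)).comp φT
          = (C : FractionRing (MvPolynomial (Fin n) K) →+* MvPolynomial (Fin k) (FractionRing (MvPolynomial (Fin n) K))).comp φ := by
        ext x
        simp [φT]
      have hg : ((map (σ := Fin k) T.subtype) ∘ fun j => X j + C (sT j))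
          = fun j => X j + C (s j) := by
        funext j
        rw [Function.comp_apply, map_add, MvPolynomial.map_X, MvPolynomial.map_C]
        rfl
      rw [hf, hg]
    rw [← h1, coeff_map]
    exact (BT.coeff m).2
  -- eval of B-related objects under constant coefficient
  have hevalmap : eval s (map φ A) = ι (aeval g A) := by
    rw [eval_map, aeval_def, eval₂_comp_left ι, ← hφalg]
    rfl
  -- the chosen linear coefficient is nonzero
  have hα0 : α i₀ ≠ 0 := by
    have e1 : α i₀ = constantCoeff (pderiv i₀ B) := by
      have := coeff_pderiv' i₀ 0 B
      rw [zero_add] at this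
      rw [hαdef]
      simp only [constantCoeff_eq, this, Finsupp.coe_zero, Pi.zero_apply, Nat.cast_zero, zero_add,
        mul_one]
    have e2 : pderiv i₀ B = aeval (fun j => X j + C (s j)) (pderiv i₀ (map φ A)) := by
      rw [hBaeval, pderiv_aeval_shift]
    have e3 : constantCoeff (aeval (fun j => X j + C (s j)) (pderiv i₀ (map φ A)))
        = eval s (pderiv i₀ (map φ A)) := constantCoeff_aeval_shift s _
    have e4 : eval s (pderiv i₀ (map φ A)) = ι (aeval g (pderiv i₀ A)) := by
      rw [pderiv_map, eval_map, aeval_def, eval₂_comp_left ι, ← hφalg]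
      rfl
    rw [e1, e2, e3, e4]
    intro hc
    exact hi₀ (IsFractionRing.injective (MvPolynomial (Fin n) K) (FractionRing (MvPolynomial (Fin n) K)) (by rw [hc, map_zero]))
  have hB0 : coeff 0 B = 0 := by
    have h1 : constantCoeff B = eval s (map φ A) := by
      rw [hBaeval]; exact constantCoeff_aeval_shift s _
    have : constantCoeff B = coeff 0 B := by rw [constantCoeff_eq]
    rw [← this, h1, hevalmap, hAann, map_zero]
  -- the substituted polynomials
  set h : Fin k → MvPolynomial (Fin n) (FractionRing (MvPolynomial (Fin n) K)) := fun i => map ι (Ht t (g i)) with hhdef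
  set I : Ideal (MvPolynomial (Fin n) (FractionRing (MvPolynomial (Fin n) K))) :=
    Ideal.span (Set.range (X : Fin n → MvPolynomial (Fin n) (FractionRing (MvPolynomial (Fin n) K)))) with hIdef
  set E : MvPolynomial (Fin n) (FractionRing (MvPolynomial (Fin n) K)) := aeval (fun i => h i + C (s i)) (map φ A) with hEdef
  set G : Fin k → MvPolynomial (Fin n) (MvPolynomial (Fin n) K) := fun i =>
    eval₂ ((C : (MvPolynomial (Fin n) K) →+* MvPolynomial (Fin n) (MvPolynomial (Fin n) K)).comp (C : K →+* MvPolynomial (Fin n) K))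
      (fun j => X j + C (X j)) (g i) with hGdef
  have hHtG : ∀ i, Ht t (g i) = truncLE t (G i - C (g i)) := fun i => rfl
  have hconstG : ∀ i, constantCoeff (G i) = g i := by
    intro i
    have key : (constantCoeff.comp (eval₂Hom
        ((C : (MvPolynomial (Fin n) K) →+* MvPolynomial (Fin n) (MvPolynomial (Fin n) K)).comp (C : K →+* MvPolynomial (Fin n) K))
        (fun j => X j + C (X j)))) = RingHom.id (MvPolynomial (Fin n) K) := by
      apply MvPolynomial.ringHom_ext
      · intro r; simp
      · intro j; simp
    exact RingHom.congr_fun key (g i)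
  have hdiffmem : ∀ i, h i - map ι (G i - C (g i)) ∈ I ^ (t + 1) := by
    intro i
    have hmapeq : h i - map ι (G i - C (g i))
        = map ι (truncLE t (G i - C (g i)) - (G i - C (g i))) := by
      have h1 : h i = map ι (truncLE t (G i - C (g i))) := by
        simp only [hhdef]
        rw [hHtG]
      rw [h1, ← map_sub]
    rw [hmapeq]
    apply mem_pow_of_support
    intro m hm
    rw [MvPolynomial.mem_support_iff] at hm
    by_contra hlt
    apply hm
    have hmt : mdeg m ≤ t := by omega
    have hco : coeff m (truncLE t (G i - C (g i)) - (G i - C (g i))) = 0 := by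
      rw [coeff_sub, coeff_truncLE]
      by_cases h1 : 1 ≤ mdeg m ∧ mdeg m ≤ t
      · rw [if_pos h1, sub_self]
      · rw [if_neg h1]
        have hm0 : mdeg m = 0 := by omega
        have : m = 0 := mdeg_eq_zero hm0
        subst this
        have : coeff 0 (G i - C (g i)) = 0 := by
          rw [coeff_sub]
          have h2 : coeff 0 (G i) = g i := by
            rw [← hconstG i, constantCoeff_eq]
          rw [h2, coeff_C, if_pos rfl, sub_self]
        rw [this, zero_sub, neg_zero]
    rw [coeff_map, hco, map_zero]
  have hE0 : aeval (fun i => map ι (G i)) (map φ A) = (0 : MvPolynomial (Fin n) (FractionRing (MvPolynomial (Fin n) K))) := by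
    set Θ : (MvPolynomial (Fin n) K) →+* MvPolynomial (Fin n) (MvPolynomial (Fin n) K) :=
      eval₂Hom ((C : (MvPolynomial (Fin n) K) →+* MvPolynomial (Fin n) (MvPolynomial (Fin n) K)).comp (C : K →+* MvPolynomial (Fin n) K))
        (fun j => X j + C (X j)) with hΘdef
    set Ξ : (MvPolynomial (Fin n) K) →+* MvPolynomial (Fin n) (FractionRing (MvPolynomial (Fin n) K)) :=
      (map ι : MvPolynomial (Fin n) (MvPolynomial (Fin n) K) →+* MvPolynomial (Fin n) (FractionRing (MvPolynomial (Fin n) K))).comp Θ with hΞdef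
    have key : aeval (fun i => map ι (G i)) (map φ A) = Ξ (aeval g A) := by
      rw [aeval_def (fun i => map ι (G i)), MvPolynomial.algebraMap_eq, eval₂_map,
        aeval_def g, eval₂_comp_left Ξ]
      have hf : (C : (FractionRing (MvPolynomial (Fin n) K)) →+* MvPolynomial (Fin n) (FractionRing (MvPolynomial (Fin n) K))).comp φ
          = Ξ.comp (algebraMap F (MvPolynomial (Fin n) K)) := by
        refine RingHom.ext fun x => ?_
        simp only [RingHom.comp_apply, hΞdef, hΘdef, MvPolynomial.algebraMap_apply, coe_eval₂Hom,
          eval₂_C, map_C, hφdef]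
      have hg : (fun i => map ι (G i)) = (⇑Ξ ∘ g) := by
        funext i
        rfl
      rw [hf, hg]
    rw [key, hAann, map_zero]
  have hEmem : E ∈ I ^ (t + 1) := by
    rw [← Ideal.Quotient.eq_zero_iff_mem]
    have h1 : Ideal.Quotient.mk (I ^ (t + 1)) E
        = Ideal.Quotient.mk (I ^ (t + 1)) (aeval (fun i => map ι (G i)) (map φ A)) := by
      rw [hEdef, aeval_def, MvPolynomial.algebraMap_eq, eval₂_map,
        eval₂_comp_left (S₂ := MvPolynomial (Fin n) (FractionRing (MvPolynomial (Fin n) K)) ⧸ I ^ (t + 1)) (Ideal.Quotient.mk (I ^ (t + 1))),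
        aeval_def (fun i => map ι (G i)), MvPolynomial.algebraMap_eq, eval₂_map,
        eval₂_comp_left (S₂ := MvPolynomial (Fin n) (FractionRing (MvPolynomial (Fin n) K)) ⧸ I ^ (t + 1)) (Ideal.Quotient.mk (I ^ (t + 1)))]
      congr 1
      funext i
      show Ideal.Quotient.mk (I ^ (t + 1)) (h i + C (s i))
          = Ideal.Quotient.mk (I ^ (t + 1)) (map ι (G i))
      rw [Ideal.Quotient.eq]
      have heq : h i + C (s i) - map ι (G i) = h i - map ι (G i - C (g i)) := by
        rw [map_sub, map_C]
        rw [hsdef]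
        ring
      rw [heq]
      exact hdiffmem i
    rw [h1, hE0, map_zero]
  -- expansion of E as a sum over the support of B
  have hEB : E = aeval h B := by
    have hcomp := MvPolynomial.comp_aeval (R := FractionRing (MvPolynomial (Fin n) K)) (fun j => X j + C (s j))
      (aeval h : MvPolynomial (Fin k) (FractionRing (MvPolynomial (Fin n) K)) →ₐ[FractionRing (MvPolynomial (Fin n) K)] MvPolynomial (Fin n) (FractionRing (MvPolynomial (Fin n) K)))
    have happ := congrArg (fun (ψ : MvPolynomial (Fin k) (FractionRing (MvPolynomial (Fin n) K)) →ₐ[FractionRing (MvPolynomial (Fin n) K)] MvPolynomial (Fin n) (FractionRing (MvPolynomial (Fin n) K)))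
      => ψ (map φ A)) hcomp
    simp only [AlgHom.comp_apply] at happ
    rw [hEdef, hBaeval, happ]
    have : (fun j => (aeval h : MvPolynomial (Fin k) (FractionRing (MvPolynomial (Fin n) K)) →ₐ[FractionRing (MvPolynomial (Fin n) K)] MvPolynomial (Fin n) (FractionRing (MvPolynomial (Fin n) K)))
        (X j + C (s j))) = fun j => h j + C (s j) := by
      funext j
      rw [map_add, aeval_X, aeval_C, MvPolynomial.algebraMap_eq]
    rw [this]
  have hEsum : E = ∑ m ∈ B.support, C (coeff m B) * ∏ i, h i ^ m i := by
    rw [hEB]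
    conv_lhs => rw [B.as_sum]
    rw [map_sum]
    refine Finset.sum_congr rfl fun m hm => ?_
    rw [aeval_monomial, MvPolynomial.algebraMap_eq, Finsupp.prod_pow]
  set S2 : Finset (Fin k →₀ ℕ) := B.support.filter (fun m => 2 ≤ mdeg m) with hS2def
  have hsplit : (∑ m ∈ B.support, C (coeff m B) * ∏ i, h i ^ m i)
      = (∑ i, C (α i) * h i) + ∑ m ∈ S2, C (coeff m B) * ∏ i, h i ^ m i := by
    rw [← Finset.sum_filter_add_sum_filter_not B.support (fun m => mdeg m ≤ 1)]
    congr 1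
    · -- low degree part
      have hsub : B.support.filter (fun m => mdeg m = 1)
          ⊆ B.support.filter (fun m => mdeg m ≤ 1) := by
        intro m hm
        rw [Finset.mem_filter] at hm ⊢
        exact ⟨hm.1, by omega⟩
      have hzero : ∀ m ∈ B.support.filter (fun m => mdeg m ≤ 1),
          m ∉ B.support.filter (fun m => mdeg m = 1) →
          C (coeff m B) * ∏ i, h i ^ m i = 0 := by
        intro m hm hnm
        rw [Finset.mem_filter] at hm
        have hm0 : mdeg m = 0 := by
          by_contra hc
          exact hnm (Finset.mem_filter.mpr ⟨hm.1, by omega⟩)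
        have : m = 0 := mdeg_eq_zero hm0
        subst this
        rw [hB0, map_zero, zero_mul]
      rw [← Finset.sum_subset hsub hzero]
      -- now compare with the sum over the image of single
      have hinj : Function.Injective (fun i : Fin k => Finsupp.single i 1) :=
        Finsupp.single_left_injective one_ne_zero
      have himg : (∑ i, C (α i) * h i)
          = ∑ m ∈ Finset.image (fun i : Fin k => Finsupp.single i 1) Finset.univ,
              C (coeff m B) * ∏ i', h i' ^ m i' := by
        rw [Finset.sum_image (fun a _ b _ hab => hinj hab)]
        refine Finset.sum_congr rfl fun i _ => ?_
        have hprod : (∏ i', h i' ^ (Finsupp.single i 1) i') = h i := by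
          rw [Finset.prod_eq_single i
            (fun j _ hj => by rw [Finsupp.single_eq_of_ne' (Ne.symm hj), pow_zero])
            (fun hc => absurd (Finset.mem_univ i) hc)]
          rw [Finsupp.single_eq_same, pow_one]
        rw [hprod, hαdef]
      rw [himg]
      refine Finset.sum_subset ?_ ?_
      · intro m hm
        rw [Finset.mem_filter] at hm
        obtain ⟨i, rfl⟩ := mdeg_eq_one hm.2
        exact Finset.mem_image.mpr ⟨i, Finset.mem_univ i, rfl⟩
      · intro m hm hnm
        obtain ⟨i, _, rfl⟩ := Finset.mem_image.mp hm
        have : Finsupp.single i 1 ∉ B.support := by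
          intro hc
          exact hnm (Finset.mem_filter.mpr ⟨hc, mdeg_single i 1⟩)
        rw [MvPolynomial.notMem_support_iff.mp this, map_zero, zero_mul]
    · refine Finset.sum_congr ?_ fun _ _ => rfl
      apply Finset.filter_congr
      intro m _
      simp only [not_le]
      constructor <;> intro h' <;> omega
  -- now assemble the answer
  refine ⟨α, fun hc => hα0 (congrFun hc i₀), fun i => hcoeffT _,
    S2.card,
    fun j => -(coeff ((S2.equivFin.symm j : { x // x ∈ S2 }) : Fin k →₀ ℕ) B),
    fun j i => ((S2.equivFin.symm j : { x // x ∈ S2 }) : Fin k →₀ ℕ) i,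
    E, fun j => T.neg_mem (hcoeffT _), ?_, hEmem, ?_⟩
  · intro j
    have hmem : ((S2.equivFin.symm j : { x // x ∈ S2 }) : Fin k →₀ ℕ)
        ∈ B.support.filter (fun m => 2 ≤ mdeg m) := (S2.equivFin.symm j).2
    have h2 : 2 ≤ mdeg ((S2.equivFin.symm j : { x // x ∈ S2 }) : Fin k →₀ ℕ) :=
      (Finset.mem_filter.mp hmem).2
    have h3 : mdeg ((S2.equivFin.symm j : { x // x ∈ S2 }) : Fin k →₀ ℕ)
        = ∑ i, ((S2.equivFin.symm j : { x // x ∈ S2 }) : Fin k →₀ ℕ) i :=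
      Finsupp.sum_fintype _ _ fun i => rfl
    show 2 ≤ ∑ i, ((S2.equivFin.symm j : { x // x ∈ S2 }) : Fin k →₀ ℕ) i
    omega
  · -- the identity
    have hreindex : (∑ j : Fin S2.card,
          C (-(coeff ((S2.equivFin.symm j : { x // x ∈ S2 }) : Fin k →₀ ℕ) B)) *
            ∏ i, h i ^ ((S2.equivFin.symm j : { x // x ∈ S2 }) : Fin k →₀ ℕ) i)
        = ∑ m ∈ S2, C (-(coeff m B)) * ∏ i, h i ^ m i := by
      rw [← Finset.sum_coe_sort S2 (fun m => C (-(coeff m B)) * ∏ i, h i ^ m i)]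
      exact (Fintype.sum_equiv S2.equivFin
        (fun x => C (-(coeff (x : Fin k →₀ ℕ) B)) * ∏ i, h i ^ (x : Fin k →₀ ℕ) i)
        _ (fun x => by rw [Equiv.symm_apply_apply])).symm
    rw [hreindex]
    have hneg : (∑ m ∈ S2, C (-(coeff m B)) * ∏ i, h i ^ m i)
        = -∑ m ∈ S2, C (coeff m B) * ∏ i, h i ^ m i := by
      rw [← Finset.sum_neg_distrib]
      refine Finset.sum_congr rfl fun m _ => ?_
      rw [map_neg]
      ring
    rw [hneg]
    have hfinal := hEsum.trans hsplit
    rw [hfinal]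
    ring
end Main


end
end
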